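/- arXiv:1707.09762 — 6 statements merged into one kernel-verified Lean document; each statement's English description precedes it below -/
import Mathlib

section
/- Let A be a unital C*-algebra and let a, c be elements of the open unit ball of A (i.e. ‖a‖ < 1 and ‖c‖ < 1). Then (1 - a c*) (1 - c c*)⁻¹ (1 - c a*) - (1 - a a*) = (c - a) c* (1 - c c*)⁻¹ c (c - a)* + (c - a)(c - a)*, and in particular this element is nonnegative (≥ 0) in A. -/
/- STATEMENT 0: In a unital C*-algebra, for a, c in the open unit ball,
(1 - a c*)(1 - c c*)⁻¹(1 - c a*) - (1 - a a*)
  = (c - a) c* (1 - c c*)⁻¹ c (c - a)* + (c - a)(c - a)*, and this element is ≥ 0. -/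
theorem stmt_0 {A : Type*} [CStarAlgebra A] [PartialOrder A] [StarOrderedRing A]
    (a c : A) (ha : ‖a‖ < 1) (hc : ‖c‖ < 1) :
    (1 - a * star c) * Ring.inverse (1 - c * star c) * (1 - c * star a) - (1 - a * star a)
      = (c - a) * star c * Ring.inverse (1 - c * star c) * c * star (c - a)
        + (c - a) * star (c - a) ∧
    0 ≤ (1 - a * star c) * Ring.inverse (1 - c * star c) * (1 - c * star a)
        - (1 - a * star a) := by
  have hnorm : ‖c * star c‖ < 1 := by
    calc ‖c * star c‖ ≤ ‖c‖ * ‖star c‖ := norm_mul_le _ _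
    _ = ‖c‖ * ‖c‖ := by rw [norm_star]
    _ < 1 := by nlinarith [norm_nonneg c]
  have hu : IsUnit (1 - c * star c) := isUnit_one_sub_of_norm_lt_one hnorm
  set v := Ring.inverse (1 - c * star c) with hv_def
  have h1 : (1 - c * star c) * v = 1 := Ring.mul_inverse_cancel _ hu
  have h2 : v * (1 - c * star c) = 1 := Ring.inverse_mul_cancel _ hu
  have hv : 0 ≤ v := by
    have hx : (0 : A) ≤ 1 - c * star c := by
      have := (CStarAlgebra.mem_Icc_iff_norm_le_one (x := c * star c)).mpr
        ⟨mul_star_self_nonneg c, hnorm.le⟩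
      exact sub_nonneg.mpr this.2
    have : v = ↑hu.unit⁻¹ := by rw [hv_def, ← Ring.inverse_unit hu.unit, hu.unit_spec]
    rw [this]
    exact CFC.inv_nonneg_of_nonneg hu.unit (by rwa [hu.unit_spec])
  have e1 : (1 - a * star c) = (1 - c * star c) + (c - a) * star c := by noncomm_ring
  have e2 : (1 - c * star a) = (1 - c * star c) + c * star (c - a) := by
    rw [star_sub]; noncomm_ring
  have expand : (1 - a * star c) * v * (1 - c * star a)
      = (1 - c * star c) * v * (1 - c * star c)
        + (1 - c * star c) * v * (c * star (c - a))
        + ((c - a) * star c) * v * (1 - c * star c)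
        + ((c - a) * star c) * v * (c * star (c - a)) := by
    rw [e1, e2]; noncomm_ring
  have p3 : ((c - a) * star c) * v * (1 - c * star c) = (c - a) * star c := by
    rw [mul_assoc, h2, mul_one]
  have key : (1 - a * star c) * v * (1 - c * star a) - (1 - a * star a)
      = (c - a) * star c * v * c * star (c - a) + (c - a) * star (c - a) := by
    rw [expand, h1, one_mul, one_mul, p3]
    simp only [star_sub]
    noncomm_ring
  refine ⟨key, ?_⟩
  rw [key]
  apply add_nonneg
  · have : (c - a) * star c * v * c * star (c - a)
        = ((c - a) * star c) * v * star ((c - a) * star c) := by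
      simp only [star_mul, star_star]
      noncomm_ring
    rw [this]
    exact star_right_conjugate_nonneg hv _
  · exact mul_star_self_nonneg _
end

section
/- Let A be a unital C*-algebra and let a, c, b ∈ A with ‖a‖ < 1 and ‖c‖ < 1. Then the 2×2 operator matrix [[a, b],[0, c]] has norm strictly less than 1 if and only if (1 - a a*)^{-1/2} b (1 - c* c)⁻¹ b* (1 - a a*)^{-1/2} < 1 (i.e. 1 minus this element is positive and invertible). -/
open Matrix
set_option linter.unusedSectionVars false
set_option linter.unreachableTactic false
set_option linter.unusedTactic false
set_option linter.unnecessarySeqFocus false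

/-- Nonnegativity in the C*-algebra `M₂(A)` of 2×2 matrices over a unital C*-algebra `A`:
an element is nonnegative iff it is of the form `z* z`. -/
def matNonneg {A : Type*} [CStarAlgebra A] {n : ℕ}
    (X : Matrix (Fin n) (Fin n) A) : Prop :=
  ∃ z : Matrix (Fin n) (Fin n) A, star z * z = X

/-- Positive and invertible in `Mₙ(A)`. -/
def matPosInv {A : Type*} [CStarAlgebra A] {n : ℕ}
    (X : Matrix (Fin n) (Fin n) A) : Prop :=
  matNonneg X ∧ IsUnit X

/-- `x⁻¹ᐟ²`: the inverse of the square root, via continuous functional calculus. -/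
noncomputable def invSqrt {A : Type*} [CStarAlgebra A] [PartialOrder A] [StarOrderedRing A]
    (x : A) : A :=
  Ring.inverse (CFC.sqrt x)

section helpers
variable {A : Type*} [CStarAlgebra A] [PartialOrder A] [StarOrderedRing A]

lemma my_nonneg_one_sub (x : A) (hx : ‖x * star x‖ < 1) : 0 ≤ 1 - x * star x := by
  have h1 : 0 ≤ x * star x := mul_star_self_nonneg x
  have h2 : x * star x ≤ 1 := by
    rw [← CStarAlgebra.norm_le_one_iff_of_nonneg _ h1]; exact hx.le
  rwa [← sub_nonneg] at h2

lemma my_unit_one_sub (x : A) (hx : ‖x * star x‖ < 1) : IsUnit (1 - x * star x) :=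
  isUnit_one_sub_of_norm_lt_one hx

lemma my_ringinv_eq (x y : A) (hxu : IsUnit x) (h1 : x * y = 1) : Ring.inverse x = y := by
  have := Ring.inverse_mul_cancel x hxu
  calc Ring.inverse x = Ring.inverse x * (x * y) := by rw [h1, mul_one]
    _ = (Ring.inverse x * x) * y := by rw [mul_assoc]
    _ = y := by rw [this, one_mul]

lemma my_star_ringinv (x : A) (hx : IsUnit x) (hsa : IsSelfAdjoint x) :
    star (Ring.inverse x) = Ring.inverse x := by
  have h1 : x * star (Ring.inverse x) = 1 := by
    calc x * star (Ring.inverse x) = star (Ring.inverse x * star x) := by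
          rw [StarMul.star_mul, star_star]
      _ = star (Ring.inverse x * x) := by rw [hsa.star_eq]
      _ = 1 := by rw [Ring.inverse_mul_cancel x hx, star_one]
  exact (my_ringinv_eq x _ hx h1).symm

lemma my_sqrt_unit (x : A) (hx0 : 0 ≤ x) (hxu : IsUnit x) : IsUnit (CFC.sqrt x) := by
  set s := CFC.sqrt x with hs
  have hss : s * s = x := CFC.sqrt_mul_sqrt_self x hx0
  have h1 : s * (s * Ring.inverse x) = 1 := by
    rw [← mul_assoc, hss, Ring.mul_inverse_cancel x hxu]
  have hcomm : Ring.inverse x * s = s * Ring.inverse x := by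
    have hxs : s * x = x * s := by rw [← hss, mul_assoc]
    calc Ring.inverse x * s = Ring.inverse x * s * (x * Ring.inverse x) := by
          rw [Ring.mul_inverse_cancel x hxu, mul_one]
      _ = Ring.inverse x * (s * x) * Ring.inverse x := by noncomm_ring
      _ = Ring.inverse x * (x * s) * Ring.inverse x := by rw [hxs]
      _ = (Ring.inverse x * x) * (s * Ring.inverse x) := by noncomm_ring
      _ = s * Ring.inverse x := by rw [Ring.inverse_mul_cancel x hxu, one_mul]
  have h2 : (s * Ring.inverse x) * s = 1 := by
    rw [mul_assoc, hcomm, ← mul_assoc, hss, Ring.mul_inverse_cancel x hxu]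
  exact ⟨⟨s, s * Ring.inverse x, h1, h2⟩, rfl⟩

lemma my_invSqrt_facts (x : A) (hx0 : 0 ≤ x) (hxu : IsUnit x) :
    star (invSqrt x) = invSqrt x ∧ IsUnit (invSqrt x) ∧ invSqrt x * x * invSqrt x = 1 := by
  set s := CFC.sqrt x with hs
  have hss : s * s = x := CFC.sqrt_mul_sqrt_self x hx0
  have hsu : IsUnit s := my_sqrt_unit x hx0 hxu
  have hsa : IsSelfAdjoint s := (CFC.sqrt_nonneg (a := x)).isSelfAdjoint
  refine ⟨my_star_ringinv s hsu hsa, (isUnit_ringInverse).mpr hsu, ?_⟩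
  show Ring.inverse s * x * Ring.inverse s = 1
  rw [← hss]
  calc Ring.inverse s * (s * s) * Ring.inverse s
      = (Ring.inverse s * s) * (s * Ring.inverse s) := by noncomm_ring
    _ = 1 := by rw [Ring.inverse_mul_cancel s hsu, Ring.mul_inverse_cancel s hsu, one_mul]

lemma my_scongr (x u : A) (hu : IsUnit u) (h : 0 ≤ x ∧ IsUnit x) :
    0 ≤ star u * x * u ∧ IsUnit (star u * x * u) :=
  ⟨star_left_conjugate_nonneg h.1 u, (hu.star.mul h.2).mul hu⟩

lemma my_scongr_iff (x u : A) (hu : IsUnit u) :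
    (0 ≤ star u * x * u ∧ IsUnit (star u * x * u)) ↔ (0 ≤ x ∧ IsUnit x) := by
  refine ⟨fun h => ?_, my_scongr x u hu⟩
  have hv : IsUnit (Ring.inverse u) := isUnit_ringInverse.mpr hu
  have key : star (Ring.inverse u) * (star u * x * u) * Ring.inverse u = x := by
    have h1 : star (Ring.inverse u) * star u = 1 := by
      rw [← StarMul.star_mul, Ring.mul_inverse_cancel u hu, star_one]
    calc star (Ring.inverse u) * (star u * x * u) * Ring.inverse u
        = (star (Ring.inverse u) * star u) * x * (u * Ring.inverse u) := by noncomm_ring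
      _ = x := by rw [h1, Ring.mul_inverse_cancel u hu, one_mul, mul_one]
  have := my_scongr _ _ hv h
  rwa [key] at this

end helpers

section matrixhelpers
variable {A : Type*} [CStarAlgebra A] [PartialOrder A] [StarOrderedRing A]

lemma my_star_fin_two (a b c d : A) :
    star !![a,b;c,d] = !![star a, star c; star b, star d] := by
  ext i j; fin_cases i <;> fin_cases j <;> simp [star_eq_conjTranspose]

lemma my_mul_fin_two (a b c d e f g h : A) :
    !![a,b;c,d] * !![e,f;g,h] = !![a*e+b*g, a*f+b*h; c*e+d*g, c*f+d*h] := by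
  ext i j; fin_cases i <;> fin_cases j <;> simp [Matrix.mul_apply, Fin.sum_univ_two]

lemma my_one_sub_fin_two (a b c d : A) :
    (1 : Matrix (Fin 2) (Fin 2) A) - !![a,b;c,d] = !![1-a,-b;-c,1-d] := by
  ext i j; fin_cases i <;> fin_cases j <;> simp [Matrix.one_apply]

lemma my_mNonneg_congr (X U : Matrix (Fin 2) (Fin 2) A) (h : matNonneg X) :
    matNonneg (star U * X * U) := by
  obtain ⟨z, hz⟩ := h
  exact ⟨z * U, by rw [StarMul.star_mul]; nth_rw 1 [← hz]; noncomm_ring⟩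

lemma my_mcongr (X U : Matrix (Fin 2) (Fin 2) A) (hU : IsUnit U) :
    matPosInv (star U * X * U) ↔ matPosInv X := by
  have fwd : ∀ (Y V : Matrix (Fin 2) (Fin 2) A), IsUnit V → matPosInv Y →
      matPosInv (star V * Y * V) := fun Y V hV hY =>
    ⟨my_mNonneg_congr Y V hY.1, (hV.star.mul hY.2).mul hV⟩
  refine ⟨fun h => ?_, fwd X U hU⟩
  have hV : IsUnit (Ring.inverse U) := isUnit_ringInverse.mpr hU
  have key : star (Ring.inverse U) * (star U * X * U) * Ring.inverse U = X := by
    have h1 : star (Ring.inverse U) * star U = 1 := by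
      rw [← StarMul.star_mul, Ring.mul_inverse_cancel U hU, star_one]
    calc star (Ring.inverse U) * (star U * X * U) * Ring.inverse U
        = (star (Ring.inverse U) * star U) * X * (U * Ring.inverse U) := by noncomm_ring
      _ = X := by rw [h1, Ring.mul_inverse_cancel U hU, one_mul, mul_one]
  have := fwd _ _ hV h
  rwa [key] at this

lemma my_diag_posInv_iff (S R : A) (hR0 : 0 ≤ R) (hRu : IsUnit R) :
    matPosInv !![S, 0; 0, R] ↔ (0 ≤ S ∧ IsUnit S) := by
  constructor
  · rintro ⟨⟨z, hz⟩, hu⟩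
    constructor
    · have h00 : (star z * z) 0 0 = S := by rw [hz]; simp
      have : (star z * z) 0 0 = star (z 0 0) * z 0 0 + star (z 1 0) * z 1 0 := by
        simp [Matrix.mul_apply, Fin.sum_univ_two, Matrix.star_apply]
      rw [h00] at this
      rw [this]
      exact add_nonneg (star_mul_self_nonneg _) (star_mul_self_nonneg _)
    · obtain ⟨u, hu⟩ := hu
      set V : Matrix (Fin 2) (Fin 2) A := u.inv with hV
      have hMV : !![S, 0; 0, R] * V = 1 := by rw [← hu]; exact u.val_inv
      have hVM : V * !![S, 0; 0, R] = 1 := by rw [← hu]; exact u.inv_val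
      have h1 : S * V 0 0 = 1 := by
        have := congrArg (fun M => M 0 0) hMV
        simpa [Matrix.mul_apply, Fin.sum_univ_two, Matrix.one_apply] using this
      have h2 : V 0 0 * S = 1 := by
        have := congrArg (fun M => M 0 0) hVM
        simpa [Matrix.mul_apply, Fin.sum_univ_two, Matrix.one_apply] using this
      exact ⟨⟨S, V 0 0, h1, h2⟩, rfl⟩
  · rintro ⟨hS0, hSu⟩
    constructor
    · refine ⟨!![CFC.sqrt S, 0; 0, CFC.sqrt R], ?_⟩
      rw [my_star_fin_two, my_mul_fin_two]
      have e1 : star (CFC.sqrt S) = CFC.sqrt S := (CFC.sqrt_nonneg (a := S)).isSelfAdjoint.star_eq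
      have e2 : star (CFC.sqrt R) = CFC.sqrt R := (CFC.sqrt_nonneg (a := R)).isSelfAdjoint.star_eq
      rw [e1, e2, star_zero, CFC.sqrt_mul_sqrt_self S hS0, CFC.sqrt_mul_sqrt_self R hR0]
      simp
    · refine ⟨⟨!![S, 0; 0, R], !![Ring.inverse S, 0; 0, Ring.inverse R], ?_, ?_⟩, rfl⟩
      · rw [my_mul_fin_two, Ring.mul_inverse_cancel S hSu, Ring.mul_inverse_cancel R hRu,
          Matrix.one_fin_two]
        simp
      · rw [my_mul_fin_two, Ring.inverse_mul_cancel S hSu, Ring.inverse_mul_cancel R hRu,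
          Matrix.one_fin_two]
        simp

end matrixhelpers

section more
variable {A : Type*} [CStarAlgebra A] [PartialOrder A] [StarOrderedRing A]

lemma my_unip_unit (p : A) : IsUnit !![(1:A), 0; p, 1] := by
  refine ⟨⟨!![(1:A), 0; p, 1], !![(1:A), 0; -p, 1], ?_, ?_⟩, rfl⟩ <;>
    (rw [my_mul_fin_two, Matrix.one_fin_two]
     ext i j; fin_cases i <;> fin_cases j <;> simp <;> noncomm_ring)

lemma my_unip_conj (S r q p : A) :
    !![(1:A), q; 0, 1] * !![S, 0; 0, r] * !![(1:A), 0; p, 1]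
      = !![S + q*r*p, q*r; r*p, r] := by
  rw [my_mul_fin_two, my_mul_fin_two]
  ext i j; fin_cases i <;> fin_cases j <;> simp <;> noncomm_ring

end more

/- STATEMENT 2: for ‖a‖ < 1, ‖c‖ < 1 and b ∈ A, the 2×2 matrix [[a,b],[0,c]] has
(C*-) norm < 1 iff (1-aa*)^{-1/2} b (1-c*c)⁻¹ b* (1-aa*)^{-1/2} < 1.
Since Mathlib (in this version) does not carry the C*-norm on `M₂(A)`, the condition
`‖X‖ < 1` is expressed by the standard equivalent C*-algebraic condition that
`1 - X X*` is positive invertible in `M₂(A)`. -/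
theorem stmt_2 {A : Type*} [CStarAlgebra A] [PartialOrder A] [StarOrderedRing A]
    (a b c : A) (ha : ‖a‖ < 1) (hc : ‖c‖ < 1) :
    matPosInv (1 - (!![a, b; 0, c]) * star (!![a, b; 0, c])) ↔
      (0 ≤ 1 - invSqrt (1 - a * star a) * b * Ring.inverse (1 - star c * c) * star b *
            invSqrt (1 - a * star a) ∧
        IsUnit (1 - invSqrt (1 - a * star a) * b * Ring.inverse (1 - star c * c) * star b *
            invSqrt (1 - a * star a))) := by
  have hnaa : ‖a * star a‖ < 1 := by
    rw [CStarRing.norm_self_mul_star]; nlinarith [norm_nonneg a]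
  have hncc : ‖c * star c‖ < 1 := by
    rw [CStarRing.norm_self_mul_star]; nlinarith [norm_nonneg c]
  have hnscc : ‖star c * c‖ < 1 := by
    rw [CStarRing.norm_star_mul_self]; nlinarith [norm_nonneg c]
  have hx0 : 0 ≤ 1 - a * star a := my_nonneg_one_sub a hnaa
  have hxu : IsUnit (1 - a * star a) := my_unit_one_sub a hnaa
  have hr0 : 0 ≤ 1 - c * star c := my_nonneg_one_sub c hncc
  have hru : IsUnit (1 - c * star c) := my_unit_one_sub c hncc
  have hwu : IsUnit (1 - star c * c) := isUnit_one_sub_of_norm_lt_one hnscc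
  set e := Ring.inverse (1 - c * star c) with he
  set f := Ring.inverse (1 - star c * c) with hf
  set d := invSqrt (1 - a * star a) with hd
  have h_er : e * (1 - c * star c) = 1 := Ring.inverse_mul_cancel _ hru
  have h_re : (1 - c * star c) * e = 1 := Ring.mul_inverse_cancel _ hru
  have hse : star e = e :=
    my_star_ringinv _ hru hr0.isSelfAdjoint
  obtain ⟨hds, hdu, hdxd⟩ := my_invSqrt_facts (1 - a * star a) hx0 hxu
  -- f = 1 + c* e c
  have hwkey : (1 - star c * c) * (1 + star c * e * c) = 1 := by
    have h1 : (1 - star c * c) * star c = star c * (1 - c * star c) := by noncomm_ring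
    calc (1 - star c * c) * (1 + star c * e * c)
        = (1 - star c * c) + ((1 - star c * c) * star c) * (e * c) := by noncomm_ring
      _ = (1 - star c * c) + (star c * (1 - c * star c)) * (e * c) := by rw [h1]
      _ = (1 - star c * c) + star c * (((1 - c * star c) * e) * c) := by noncomm_ring
      _ = (1 - star c * c) + star c * (1 * c) := by rw [h_re]
      _ = 1 := by noncomm_ring
  have hf_eq : f = 1 + star c * e * c := my_ringinv_eq _ _ hwu hwkey
  set p : A := -(e * (c * star b)) with hp
  set S : A := 1 - a * star a - b * f * star b with hS
  have hsp : star p = -(b * star c * e) := by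
    rw [hp, star_neg, StarMul.star_mul, StarMul.star_mul, star_star, hse]
  -- matrix M
  have hstarX : star !![a, b; 0, c] = !![star a, 0; star b, star c] := by
    rw [my_star_fin_two, star_zero]
  have hM : 1 - !![a, b; 0, c] * star !![a, b; 0, c]
      = !![1 - a * star a - b * star b, -(b * star c); -(c * star b), 1 - c * star c] := by
    rw [hstarX, my_mul_fin_two, my_one_sub_fin_two]
    ext i j; fin_cases i <;> fin_cases j <;> simp <;> noncomm_ring
  -- entry computations
  have h01 : star p * (1 - c * star c) = -(b * star c) := by
    rw [hsp]
    calc -(b * star c * e) * (1 - c * star c)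
        = -((b * star c) * (e * (1 - c * star c))) := by noncomm_ring
      _ = -(b * star c) := by rw [h_er, mul_one]
  have h10 : (1 - c * star c) * p = -(c * star b) := by
    rw [hp]
    calc (1 - c * star c) * -(e * (c * star b))
        = -(((1 - c * star c) * e) * (c * star b)) := by noncomm_ring
      _ = -(c * star b) := by rw [h_re, one_mul]
  have hkey : -(b * star c * e) * (1 - c * star c) * -(e * (c * star b))
      = b * (star c * e * c) * star b := by
    calc -(b * star c * e) * (1 - c * star c) * -(e * (c * star b))
        = (b * star c) * (e * (1 - c * star c)) * (e * (c * star b)) := by noncomm_ring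
      _ = (b * star c) * 1 * (e * (c * star b)) := by rw [h_er]
      _ = b * (star c * e * c) * star b := by noncomm_ring
  have h00 : S + star p * (1 - c * star c) * p = 1 - a * star a - b * star b := by
    rw [hS, hf_eq, hsp, hp, hkey]
    noncomm_ring
  have hSU : star !![(1:A), 0; p, 1] = !![(1:A), star p; 0, 1] := by
    rw [my_star_fin_two]; simp
  have hfact : star !![(1:A), 0; p, 1] * !![S, 0; 0, 1 - c * star c] * !![(1:A), 0; p, 1]
      = !![1 - a * star a - b * star b, -(b * star c); -(c * star b), 1 - c * star c] := by
    rw [hSU, my_unip_conj, h00, h01, h10]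
  -- final scalar computation
  have hfin : star d * S * d = 1 - d * b * f * star b * d := by
    rw [hds, hS]
    calc d * (1 - a * star a - b * f * star b) * d
        = d * (1 - a * star a) * d - d * (b * f * star b) * d := by noncomm_ring
      _ = 1 - d * (b * f * star b) * d := by rw [hdxd]
      _ = 1 - d * b * f * star b * d := by noncomm_ring
  rw [hM, ← hfact, ← hfin]
  exact (my_mcongr _ _ (my_unip_unit p)).trans
    ((my_diag_posInv_iff S _ hr0 hru).trans (my_scongr_iff S d hdu).symm)
end

section
/- Let D be a noncommutative subset of V_nc satisfying unitary invariance and the converse direct-sum property. Then for a₁, a₂ ∈ D_n, c₁, c₂ ∈ D_m, b₁₂ ∈ V^{n×m}, b₂₁ ∈ V^{m×n}: δ_D(diag(a₁,c₁), diag(a₂,c₂))([[0, b₁₂],[b₂₁, 0]]) = max{ δ_D(a₁,c₂)(b₁₂), δ_D(c₁,a₂)(b₂₁) }. -/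
open Matrix
open scoped ENNReal

variable {V : Type*} [AddCommGroup V] [Module ℂ V]

/-- The block upper-triangular matrix [[a, b],[0, c]], reindexed to size `n + m`. -/
def blkV {n m : ℕ} (a : Matrix (Fin n) (Fin n) V) (b : Matrix (Fin n) (Fin m) V)
    (c : Matrix (Fin m) (Fin m) V) : Matrix (Fin (n + m)) (Fin (n + m)) V :=
  Matrix.reindex finSumFinEquiv finSumFinEquiv (Matrix.fromBlocks a b 0 c)

/-- The pseudometric `δ_D(a,c)(b) = [sup{t : [[a, s b],[0, c]] ∈ D_{n+m} ∀ s ∈ [0,t]}]⁻¹`,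
valued in `[0, ∞]` (with the conventions `1/0 = ∞`, `1/∞ = 0`). -/
noncomputable def ncDelta (D : ∀ n, Set (Matrix (Fin n) (Fin n) V)) {n m : ℕ}
    (a : Matrix (Fin n) (Fin n) V) (c : Matrix (Fin m) (Fin m) V)
    (b : Matrix (Fin n) (Fin m) V) : ℝ≥0∞ :=
  (sSup {t : ℝ≥0∞ | ∀ s : ℝ, 0 ≤ s → ENNReal.ofReal s ≤ t →
      blkV a ((s : ℂ) • b) c ∈ D (n + m)})⁻¹

/-- `δ̃_D(a,c) = δ_D(a,c)(a-c)`. -/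
noncomputable def ncDeltaT (D : ∀ n, Set (Matrix (Fin n) (Fin n) V)) {n : ℕ}
    (a c : Matrix (Fin n) (Fin n) V) : ℝ≥0∞ :=
  ncDelta D a c (a - c)

/-- Left multiplication of a matrix over `V` by a scalar (complex) matrix. -/
def scalarMulL {n m l : ℕ} (S : Matrix (Fin n) (Fin m) ℂ)
    (a : Matrix (Fin m) (Fin l) V) : Matrix (Fin n) (Fin l) V :=
  Matrix.of fun i j => ∑ r, S i r • a r j

/-- Right multiplication of a matrix over `V` by a scalar (complex) matrix. -/
def scalarMulR {n m l : ℕ} (a : Matrix (Fin n) (Fin m) V)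
    (T : Matrix (Fin m) (Fin l) ℂ) : Matrix (Fin n) (Fin l) V :=
  Matrix.of fun i j => ∑ r, T r j • a i r

/-- `D` respects direct sums: `a ∈ D_n, c ∈ D_m ⟹ diag(a,c) ∈ D_{n+m}`. -/
def RespectsDirectSums (D : ∀ n, Set (Matrix (Fin n) (Fin n) V)) : Prop :=
  ∀ ⦃n m : ℕ⦄ (a : Matrix (Fin n) (Fin n) V) (c : Matrix (Fin m) (Fin m) V),
    a ∈ D n → c ∈ D m → blkV a 0 c ∈ D (n + m)

/-- `D` is invariant under conjugation by scalar unitary matrices. -/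
def UnitaryInvariant (D : ∀ n, Set (Matrix (Fin n) (Fin n) V)) : Prop :=
  ∀ ⦃n : ℕ⦄ (U : Matrix (Fin n) (Fin n) ℂ), U ∈ Matrix.unitaryGroup (Fin n) ℂ →
    ∀ a ∈ D n, scalarMulL U (scalarMulR a Uᴴ) ∈ D n

/-- Converse direct-sum property: `diag(a,c) ∈ D_{n+m} ⟹ a ∈ D_n ∧ c ∈ D_m`. -/
def ConverseDirectSums (D : ∀ n, Set (Matrix (Fin n) (Fin n) V)) : Prop :=
  ∀ ⦃n m : ℕ⦄ (a : Matrix (Fin n) (Fin n) V) (c : Matrix (Fin m) (Fin m) V),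
    blkV a 0 c ∈ D (n + m) → a ∈ D n ∧ c ∈ D m

/-- The counter-diagonal matrix [[0, b₁₂],[b₂₁, 0]], reindexed to size `n + m`. -/
def offDiagV {n m : ℕ} (b₁₂ : Matrix (Fin n) (Fin m) V) (b₂₁ : Matrix (Fin m) (Fin n) V) :
    Matrix (Fin (n + m)) (Fin (n + m)) V :=
  Matrix.reindex finSumFinEquiv finSumFinEquiv (Matrix.fromBlocks 0 b₁₂ b₂₁ 0)

/-- Permutation matrix of an equivalence. -/
def permMat {k : ℕ} (σ : Fin k ≃ Fin k) : Matrix (Fin k) (Fin k) ℂ :=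
  Matrix.of fun i j => if σ j = i then 1 else 0

lemma permMat_unitary {k : ℕ} (σ : Fin k ≃ Fin k) :
    permMat σ ∈ Matrix.unitaryGroup (Fin k) ℂ := by
  rw [Matrix.mem_unitaryGroup_iff]
  ext i j
  simp only [Matrix.mul_apply, permMat, Matrix.star_apply, Matrix.of_apply, Matrix.one_apply]
  have h : ∀ r, (if σ r = i then (1:ℂ) else 0) * star (if σ r = j then (1:ℂ) else 0)
      = if r = σ.symm i then (if i = j then (1:ℂ) else 0) else 0 := by
    intro r
    rcases eq_or_ne r (σ.symm i) with rfl | hr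
    · simp [apply_ite (star : ℂ → ℂ), Equiv.apply_symm_apply, eq_comm]
    · have : σ r ≠ i := fun h => hr (by simp [← h])
      simp [this, hr]
  simp only [h]
  simp

lemma scalarMul_perm {k : ℕ} (σ : Fin k ≃ Fin k) (M : Matrix (Fin k) (Fin k) V) :
    scalarMulL (permMat σ) (scalarMulR M (permMat σ)ᴴ)
      = Matrix.of (fun i j => M (σ.symm i) (σ.symm j)) := by
  ext i j
  simp only [scalarMulL, scalarMulR, Matrix.of_apply, Matrix.conjTranspose_apply, permMat]
  have inner : ∀ r, (∑ s, star (if σ s = j then (1:ℂ) else 0) • M r s) = M r (σ.symm j) := by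
    intro r
    have h : ∀ s, star (if σ s = j then (1:ℂ) else 0) • M r s
        = if s = σ.symm j then M r s else 0 := by
      intro s
      rcases eq_or_ne s (σ.symm j) with rfl | hs
      · simp
      · have : σ s ≠ j := fun h => hs (by simp [← h])
        simp [this, hs]
    simp only [h]
    simp
  simp only [inner]
  have h2 : ∀ r, (if σ r = i then (1:ℂ) else 0) • M r (σ.symm j)
      = if r = σ.symm i then M r (σ.symm j) else 0 := by
    intro r
    rcases eq_or_ne r (σ.symm i) with rfl | hr
    · simp
    · have : σ r ≠ i := fun h => hr (by simp [← h])
      simp [this, hr]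
  simp only [h2]
  simp

/-- Membership in `D` is invariant under reindexing by any `Fin`-equivalence. -/
lemma mem_reindex {D : ∀ n, Set (Matrix (Fin n) (Fin n) V)} (huni : UnitaryInvariant D)
    {k k' : ℕ} (e : Fin k ≃ Fin k') (M : Matrix (Fin k) (Fin k) V) (hM : M ∈ D k) :
    Matrix.reindex e e M ∈ D k' := by
  have hkk : k = k' := by
    have := Fintype.card_congr e; simpa using this
  subst hkk
  have h := huni (permMat e) (permMat_unitary e) M hM
  rw [scalarMul_perm] at h
  exact h

/-- The shuffle `(a₁,c₁,a₂,c₂) ↦ (a₁,c₂,c₁,a₂)`. -/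
def shuffleE (n m : ℕ) : (Fin n ⊕ Fin m) ⊕ (Fin n ⊕ Fin m) ≃ (Fin n ⊕ Fin m) ⊕ (Fin m ⊕ Fin n) where
  toFun := fun x => match x with
    | .inl (.inl a) => .inl (.inl a)
    | .inl (.inr c) => .inr (.inl c)
    | .inr (.inl a) => .inr (.inr a)
    | .inr (.inr c) => .inl (.inr c)
  invFun := fun x => match x with
    | .inl (.inl a) => .inl (.inl a)
    | .inl (.inr c) => .inr (.inr c)
    | .inr (.inl c) => .inl (.inr c)
    | .inr (.inr a) => .inr (.inl a)
  left_inv := by rintro ((a|c)|(a|c)) <;> rfl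
  right_inv := by rintro ((a|c)|(c|a)) <;> rfl

/-- Equivalence assembling a double sum of `Fin`s. -/
def asmE (p q r s : ℕ) : (Fin p ⊕ Fin q) ⊕ (Fin r ⊕ Fin s) ≃ Fin ((p + q) + (r + s)) :=
  (Equiv.sumCongr finSumFinEquiv finSumFinEquiv).trans finSumFinEquiv

lemma blkV_apply {n m : ℕ} (a : Matrix (Fin n) (Fin n) V) (b : Matrix (Fin n) (Fin m) V)
    (c : Matrix (Fin m) (Fin m) V) (x y : Fin n ⊕ Fin m) :
    blkV a b c (finSumFinEquiv x) (finSumFinEquiv y) = Matrix.fromBlocks a b 0 c x y := by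
  simp [blkV, Matrix.reindex_apply, Matrix.submatrix_apply]

lemma offDiagV_apply {n m : ℕ} (b₁₂ : Matrix (Fin n) (Fin m) V) (b₂₁ : Matrix (Fin m) (Fin n) V)
    (x y : Fin n ⊕ Fin m) :
    offDiagV b₁₂ b₂₁ (finSumFinEquiv x) (finSumFinEquiv y)
      = Matrix.fromBlocks 0 b₁₂ b₂₁ 0 x y := by
  simp [offDiagV, Matrix.reindex_apply, Matrix.submatrix_apply]

lemma asmE_apply (p q r s : ℕ) (x : (Fin p ⊕ Fin q) ⊕ (Fin r ⊕ Fin s)) :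
    asmE p q r s x = finSumFinEquiv (Sum.map finSumFinEquiv finSumFinEquiv x) := rfl

lemma key_matrix_eq {n m : ℕ} (a₁ a₂ : Matrix (Fin n) (Fin n) V) (c₁ c₂ : Matrix (Fin m) (Fin m) V)
    (b₁₂ : Matrix (Fin n) (Fin m) V) (b₂₁ : Matrix (Fin m) (Fin n) V) :
    blkV (blkV a₁ 0 c₁) (offDiagV b₁₂ b₂₁) (blkV a₂ 0 c₂)
      = Matrix.reindex ((asmE n m m n).symm.trans (((shuffleE n m).symm).trans (asmE n m n m)))
          ((asmE n m m n).symm.trans (((shuffleE n m).symm).trans (asmE n m n m)))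
          (blkV (blkV a₁ b₁₂ c₂) 0 (blkV c₁ b₂₁ a₂)) := by
  ext i j
  obtain ⟨p, rfl⟩ := (asmE n m n m).surjective i
  obtain ⟨q, rfl⟩ := (asmE n m n m).surjective j
  have hL : ∀ (p q : (Fin n ⊕ Fin m) ⊕ (Fin n ⊕ Fin m)),
      blkV (blkV a₁ 0 c₁) (offDiagV b₁₂ b₂₁) (blkV a₂ 0 c₂) (asmE n m n m p) (asmE n m n m q)
        = Matrix.fromBlocks (Matrix.fromBlocks a₁ 0 0 c₁) (Matrix.fromBlocks 0 b₁₂ b₂₁ 0)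
            0 (Matrix.fromBlocks a₂ 0 0 c₂) p q := by
    rintro (p | p) (q | q) <;>
      simp only [asmE_apply, Sum.map_inl, Sum.map_inr, blkV_apply, offDiagV_apply,
        Matrix.fromBlocks_apply₁₁, Matrix.fromBlocks_apply₁₂, Matrix.fromBlocks_apply₂₁,
        Matrix.fromBlocks_apply₂₂, Matrix.zero_apply]
  have hR : ∀ (p q : (Fin n ⊕ Fin m) ⊕ (Fin m ⊕ Fin n)),
      blkV (blkV a₁ b₁₂ c₂) 0 (blkV c₁ b₂₁ a₂) (asmE n m m n p) (asmE n m m n q)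
        = Matrix.fromBlocks (Matrix.fromBlocks a₁ b₁₂ 0 c₂) 0
            0 (Matrix.fromBlocks c₁ b₂₁ 0 a₂) p q := by
    rintro (p | p) (q | q) <;>
      simp only [asmE_apply, Sum.map_inl, Sum.map_inr, blkV_apply,
        Matrix.fromBlocks_apply₁₁, Matrix.fromBlocks_apply₁₂, Matrix.fromBlocks_apply₂₁,
        Matrix.fromBlocks_apply₂₂, Matrix.zero_apply]
  rw [hL]
  have hsymm : ∀ (p : (Fin n ⊕ Fin m) ⊕ (Fin n ⊕ Fin m)),
      ((asmE n m m n).symm.trans (((shuffleE n m).symm).trans (asmE n m n m))).symm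
        (asmE n m n m p) = asmE n m m n (shuffleE n m p) := by
    intro p; simp [Equiv.symm_trans_apply]
  rw [Matrix.reindex_apply, Matrix.submatrix_apply, hsymm, hsymm, hR]
  rcases p with (p | p) | (p | p) <;> rcases q with (q | q) | (q | q) <;>
    simp [shuffleE]

lemma smul_offDiagV {n m : ℕ} (z : ℂ) (b₁₂ : Matrix (Fin n) (Fin m) V)
    (b₂₁ : Matrix (Fin m) (Fin n) V) :
    z • offDiagV b₁₂ b₂₁ = offDiagV (z • b₁₂) (z • b₂₁) := by
  ext i j
  obtain ⟨p, rfl⟩ := finSumFinEquiv.surjective i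
  obtain ⟨q, rfl⟩ := finSumFinEquiv.surjective j
  rcases p with p | p <;> rcases q with q | q <;>
    simp [offDiagV, Matrix.submatrix_apply]

lemma key_iff {D : ∀ n, Set (Matrix (Fin n) (Fin n) V)}
    (hds : RespectsDirectSums D) (huni : UnitaryInvariant D) (hconv : ConverseDirectSums D)
    {n m : ℕ} (a₁ a₂ : Matrix (Fin n) (Fin n) V) (c₁ c₂ : Matrix (Fin m) (Fin m) V)
    (b₁₂ : Matrix (Fin n) (Fin m) V) (b₂₁ : Matrix (Fin m) (Fin n) V) :
    blkV (blkV a₁ 0 c₁) (offDiagV b₁₂ b₂₁) (blkV a₂ 0 c₂) ∈ D ((n + m) + (n + m))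
      ↔ blkV a₁ b₁₂ c₂ ∈ D (n + m) ∧ blkV c₁ b₂₁ a₂ ∈ D (m + n) := by
  rw [key_matrix_eq]
  constructor
  · intro h
    have h2 := mem_reindex huni
      ((asmE n m m n).symm.trans (((shuffleE n m).symm).trans (asmE n m n m))).symm _ h
    rw [← Matrix.reindex_symm, Equiv.symm_apply_apply] at h2
    exact hconv _ _ h2
  · rintro ⟨h1, h2⟩
    exact mem_reindex huni _ _ (hds _ _ h1 h2)

lemma sSup_inter_of_lower {S₁ S₂ : Set ℝ≥0∞}
    (h₁ : ∀ ⦃x y : ℝ≥0∞⦄, x ≤ y → y ∈ S₁ → x ∈ S₁)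
    (h₂ : ∀ ⦃x y : ℝ≥0∞⦄, x ≤ y → y ∈ S₂ → x ∈ S₂) :
    sSup (S₁ ∩ S₂) = min (sSup S₁) (sSup S₂) := by
  apply le_antisymm
  · exact le_min (sSup_le_sSup Set.inter_subset_left) (sSup_le_sSup Set.inter_subset_right)
  · apply le_of_forall_lt_imp_le_of_dense
    intro u hu
    obtain ⟨t₁, ht₁, hut₁⟩ := lt_sSup_iff.mp (lt_of_lt_of_le hu (min_le_left _ _))
    obtain ⟨t₂, ht₂, hut₂⟩ := lt_sSup_iff.mp (lt_of_lt_of_le hu (min_le_right _ _))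
    exact le_sSup ⟨h₁ hut₁.le ht₁, h₂ hut₂.le ht₂⟩

/- STATEMENT 7:
δ_D(diag(a₁,c₁), diag(a₂,c₂))([[0,b₁₂],[b₂₁,0]]) = max{δ_D(a₁,c₂)(b₁₂), δ_D(c₁,a₂)(b₂₁)}. -/
theorem stmt_7 (D : ∀ n, Set (Matrix (Fin n) (Fin n) V))
    (hds : RespectsDirectSums D) (huni : UnitaryInvariant D) (hconv : ConverseDirectSums D)
    {n m : ℕ} (a₁ a₂ : Matrix (Fin n) (Fin n) V) (c₁ c₂ : Matrix (Fin m) (Fin m) V)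
    (b₁₂ : Matrix (Fin n) (Fin m) V) (b₂₁ : Matrix (Fin m) (Fin n) V)
    (ha₁ : a₁ ∈ D n) (ha₂ : a₂ ∈ D n) (hc₁ : c₁ ∈ D m) (hc₂ : c₂ ∈ D m) :
    ncDelta D (blkV a₁ 0 c₁) (blkV a₂ 0 c₂) (offDiagV b₁₂ b₂₁)
      = max (ncDelta D a₁ c₂ b₁₂) (ncDelta D c₁ a₂ b₂₁) := by
  have inv_min : ∀ a b : ℝ≥0∞, (min a b)⁻¹ = max a⁻¹ b⁻¹ := by
    intro a b
    rcases le_total a b with h | h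
    · rw [min_eq_left h, max_eq_left (ENNReal.inv_le_inv' h)]
    · rw [min_eq_right h, max_eq_right (ENNReal.inv_le_inv' h)]
  unfold ncDelta
  have hset : {t : ℝ≥0∞ | ∀ s : ℝ, 0 ≤ s → ENNReal.ofReal s ≤ t →
        blkV (blkV a₁ 0 c₁) ((s : ℂ) • offDiagV b₁₂ b₂₁) (blkV a₂ 0 c₂) ∈ D ((n + m) + (n + m))}
      = {t : ℝ≥0∞ | ∀ s : ℝ, 0 ≤ s → ENNReal.ofReal s ≤ t →
          blkV a₁ ((s : ℂ) • b₁₂) c₂ ∈ D (n + m)}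
      ∩ {t : ℝ≥0∞ | ∀ s : ℝ, 0 ≤ s → ENNReal.ofReal s ≤ t →
          blkV c₁ ((s : ℂ) • b₂₁) a₂ ∈ D (m + n)} := by
    ext t
    simp only [Set.mem_setOf_eq, Set.mem_inter_iff]
    constructor
    · intro h
      refine ⟨fun s hs hst => ?_, fun s hs hst => ?_⟩
      · exact ((key_iff hds huni hconv a₁ a₂ c₁ c₂ _ _).mp
          (by rw [← smul_offDiagV]; exact h s hs hst)).1
      · exact ((key_iff hds huni hconv a₁ a₂ c₁ c₂ _ _).mp
          (by rw [← smul_offDiagV]; exact h s hs hst)).2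
    · rintro ⟨h1, h2⟩ s hs hst
      rw [smul_offDiagV]
      exact (key_iff hds huni hconv a₁ a₂ c₁ c₂ _ _).mpr ⟨h1 s hs hst, h2 s hs hst⟩
  rw [hset, sSup_inter_of_lower
      (by intro x y hxy hy s hs hst; exact hy s hs (hst.trans hxy))
      (by intro x y hxy hy s hs hst; exact hy s hs (hst.trans hxy)),
    inv_min]
end

section
/- Let D be a noncommutative subset of V_nc satisfying unitary invariance and the converse direct-sum property. Then for any n, m, k ∈ ℕ, a ∈ D_n, c ∈ D_m, b ∈ V^{n×m}, and any complex matrix Z ∈ ℂ^{k×k}: δ_D(I_k ⊗ a, I_k ⊗ c)(Z ⊗ b) = δ_D(a,c)(b) · ‖Z Z*‖^{1/2}, where ‖Z Z*‖^{1/2} is the largest singular value of Z. -/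
open Matrix
open scoped ENNReal

variable {V : Type*} [AddCommGroup V] [Module ℂ V]

/-- Kronecker product of a scalar `k×k` matrix with a matrix over `V`,
reindexed to size `k·n × k·m`. -/
def kronV {k n m : ℕ} (Z : Matrix (Fin k) (Fin k) ℂ) (b : Matrix (Fin n) (Fin m) V) :
    Matrix (Fin (k * n)) (Fin (k * m)) V :=
  Matrix.reindex finProdFinEquiv finProdFinEquiv
    (Matrix.of fun (i : Fin k × Fin n) (j : Fin k × Fin m) => Z i.1 j.1 • b i.2 j.2)

namespace NcAux

lemma scalarMulL_one {n l : ℕ} (A : Matrix (Fin n) (Fin l) V) :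
    scalarMulL 1 A = A := by
  ext i j
  simp [scalarMulL, Matrix.one_apply, ite_smul]

lemma scalarMulR_one {n l : ℕ} (A : Matrix (Fin n) (Fin l) V) :
    scalarMulR A 1 = A := by
  ext i j
  simp [scalarMulR, Matrix.one_apply, ite_smul]

lemma scalarMulL_mul {n m p l : ℕ} (S : Matrix (Fin n) (Fin m) ℂ)
    (T : Matrix (Fin m) (Fin p) ℂ) (A : Matrix (Fin p) (Fin l) V) :
    scalarMulL (S * T) A = scalarMulL S (scalarMulL T A) := by
  ext i j
  simp only [scalarMulL, Matrix.of_apply, Matrix.mul_apply, Finset.sum_smul, Finset.smul_sum,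
    smul_smul]
  rw [Finset.sum_comm]

lemma scalarMulR_mul {n m p l : ℕ} (A : Matrix (Fin n) (Fin l) V)
    (S : Matrix (Fin l) (Fin m) ℂ) (T : Matrix (Fin m) (Fin p) ℂ) :
    scalarMulR A (S * T) = scalarMulR (scalarMulR A S) T := by
  ext i j
  simp only [scalarMulR, Matrix.of_apply, Matrix.mul_apply, Finset.sum_smul, Finset.smul_sum,
    smul_smul]
  rw [Finset.sum_comm]
  simp [mul_comm]

lemma scalarMulL_scalarMulR_comm {n m p l : ℕ} (S : Matrix (Fin n) (Fin m) ℂ)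
    (A : Matrix (Fin m) (Fin l) V) (T : Matrix (Fin l) (Fin p) ℂ) :
    scalarMulL S (scalarMulR A T) = scalarMulR (scalarMulL S A) T := by
  ext i j
  simp only [scalarMulL, scalarMulR, Matrix.of_apply, Finset.smul_sum, smul_smul]
  rw [Finset.sum_comm]
  simp [mul_comm]

lemma scalarMulL_eq_mul {n m l : ℕ} (S : Matrix (Fin n) (Fin m) ℂ)
    (A : Matrix (Fin m) (Fin l) ℂ) : scalarMulL S A = S * A := by
  ext i j
  simp [scalarMulL, Matrix.mul_apply]

lemma scalarMulR_eq_mul {n m l : ℕ} (A : Matrix (Fin n) (Fin m) ℂ)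
    (T : Matrix (Fin m) (Fin l) ℂ) : scalarMulR A T = A * T := by
  ext i j
  simp [scalarMulR, Matrix.mul_apply, mul_comm]

/-- permutation-type matrix for an equiv -/
def pmat {p q : ℕ} (e : Fin p ≃ Fin q) : Matrix (Fin q) (Fin p) ℂ :=
  Matrix.of fun i j => if i = e j then 1 else 0

lemma pmat_conjTranspose {p q : ℕ} (e : Fin p ≃ Fin q) :
    (pmat e)ᴴ = pmat e.symm := by
  ext i j
  simp only [pmat, Matrix.conjTranspose_apply, Matrix.of_apply]
  by_cases h : j = e i
  · simp [h]
  · rw [if_neg h, if_neg (fun hh => h (by rw [hh]; simp))]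
    simp

lemma pmat_mul_pmat {p q r : ℕ} (e : Fin p ≃ Fin q) (f : Fin r ≃ Fin p) :
    pmat e * pmat f = pmat (f.trans e) := by
  ext i j
  simp [pmat, Matrix.mul_apply, Finset.sum_ite_eq, eq_comm]
  congr

lemma pmat_refl {p : ℕ} : pmat (Equiv.refl (Fin p)) = 1 := by
  ext i j
  simp [pmat, Matrix.one_apply, eq_comm]
  congr

lemma pmat_mem_unitaryGroup {p : ℕ} (e : Fin p ≃ Fin p) :
    pmat e ∈ Matrix.unitaryGroup (Fin p) ℂ := by
  rw [Matrix.mem_unitaryGroup_iff]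
  rw [Matrix.star_eq_conjTranspose, pmat_conjTranspose, pmat_mul_pmat]
  simp [pmat_refl]

lemma scalarMul_pmat_conj {p : ℕ} (e : Fin p ≃ Fin p) (M : Matrix (Fin p) (Fin p) V) :
    scalarMulL (pmat e) (scalarMulR M (pmat e)ᴴ) = M.submatrix e.symm e.symm := by
  ext i j
  simp only [scalarMulL, scalarMulR, pmat_conjTranspose, pmat, Matrix.of_apply,
    Matrix.submatrix_apply]
  have h1 : ∀ r : Fin p, (∑ s : Fin p, (if s = e.symm j then (1:ℂ) else 0) • M r s)
      = M r (e.symm j) := by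
    intro r
    simp [ite_smul]
  have h2 : ∀ r : Fin p, (if i = e r then (1:ℂ) else 0) = if r = e.symm i then 1 else 0 := by
    intro r
    by_cases h : i = e r
    · simp [h]
    · rw [if_neg h, if_neg (fun hh => h (by rw [hh]; simp))]
  simp only [h1, h2]
  simp only [ite_smul, one_smul, zero_smul]
  have h3 : ∀ x : Fin p, (if j = e x then M (e.symm i) x else 0) = if x = e.symm j then M (e.symm i) x else 0 := by
    intro x
    by_cases h : j = e x
    · simp [h]
    · rw [if_neg h, if_neg (fun hh => h (by rw [hh]; simp))]
  simp [h3]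


variable {D : ∀ n, Set (Matrix (Fin n) (Fin n) V)}

lemma conjTranspose_mem_unitaryGroup {p : ℕ} {Q : Matrix (Fin p) (Fin p) ℂ}
    (hQ : Q ∈ Matrix.unitaryGroup (Fin p) ℂ) : Qᴴ ∈ Matrix.unitaryGroup (Fin p) ℂ := by
  rw [Matrix.mem_unitaryGroup_iff, Matrix.star_eq_conjTranspose, Matrix.conjTranspose_conjTranspose]
  rw [Matrix.mem_unitaryGroup_iff', Matrix.star_eq_conjTranspose] at hQ
  exact hQ

lemma mem_conj_iff (huni : UnitaryInvariant D) {p : ℕ} {Q : Matrix (Fin p) (Fin p) ℂ}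
    (hQ : Q ∈ Matrix.unitaryGroup (Fin p) ℂ) (M : Matrix (Fin p) (Fin p) V) :
    scalarMulL Q (scalarMulR M Qᴴ) ∈ D p ↔ M ∈ D p := by
  have hQQ : Qᴴ * Q = 1 := by
    have := Matrix.mem_unitaryGroup_iff'.mp hQ
    rwa [Matrix.star_eq_conjTranspose] at this
  constructor
  · intro h
    have h2 := huni Qᴴ (conjTranspose_mem_unitaryGroup hQ) _ h
    rw [Matrix.conjTranspose_conjTranspose, ← scalarMulL_scalarMulR_comm, ← scalarMulR_mul,
      hQQ, scalarMulR_one, ← scalarMulL_mul, hQQ, scalarMulL_one] at h2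
    exact h2
  · intro h
    exact huni Q hQ M h

lemma mem_submatrix_iff (huni : UnitaryInvariant D) {p q : ℕ} (e : Fin p ≃ Fin q)
    (M : Matrix (Fin q) (Fin q) V) : M ∈ D q ↔ M.submatrix e e ∈ D p := by
  have hpq : p = q := by simpa using Fintype.card_congr e
  subst hpq
  have key : ∀ (f : Fin p ≃ Fin p) (N : Matrix (Fin p) (Fin p) V),
      N ∈ D p → N.submatrix f f ∈ D p := by
    intro f N hN
    have := huni (pmat f.symm) (pmat_mem_unitaryGroup _) N hN
    rwa [scalarMul_pmat_conj, Equiv.symm_symm] at this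
  constructor
  · exact key e M
  · intro h
    have := key e.symm _ h
    rwa [Matrix.submatrix_submatrix, Equiv.self_comp_symm, Matrix.submatrix_id_id] at this

lemma mem_reindex_iff (huni : UnitaryInvariant D) {p q : ℕ} {ι : Type*} [Fintype ι]
    (e : ι ≃ Fin p) (e' : ι ≃ Fin q) (M : Matrix ι ι V) :
    Matrix.reindex e e M ∈ D p ↔ Matrix.reindex e' e' M ∈ D q := by
  have h : (Matrix.reindex e e M).submatrix (e'.symm.trans e) (e'.symm.trans e)
      = Matrix.reindex e' e' M := by
    ext i j
    simp
  rw [mem_submatrix_iff huni (e'.symm.trans e) (Matrix.reindex e e M), h]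


lemma kronV_smul {k n m : ℕ} (s : ℂ) (Z : Matrix (Fin k) (Fin k) ℂ)
    (b : Matrix (Fin n) (Fin m) V) : s • kronV Z b = kronV (s • Z) b := by
  ext i j
  simp [kronV, smul_smul]

lemma scalarMulL_zero {n m l : ℕ} (S : Matrix (Fin n) (Fin m) ℂ) :
    scalarMulL S (0 : Matrix (Fin m) (Fin l) V) = 0 := by
  ext i j
  simp [scalarMulL]

lemma scalarMulR_zero {n m l : ℕ} (T : Matrix (Fin m) (Fin l) ℂ) :
    scalarMulR (0 : Matrix (Fin n) (Fin m) V) T = 0 := by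
  ext i j
  simp [scalarMulR]

lemma scalarMulL_kron {k n m : ℕ} (P X : Matrix (Fin k) (Fin k) ℂ)
    (b : Matrix (Fin n) (Fin m) V) :
    scalarMulL (kronV P (1 : Matrix (Fin n) (Fin n) ℂ)) (kronV X b) = kronV (P * X) b := by
  ext i j
  obtain ⟨⟨p, x⟩, rfl⟩ : ∃ u, finProdFinEquiv u = i := ⟨_, finProdFinEquiv.apply_symm_apply i⟩
  obtain ⟨⟨q, y⟩, rfl⟩ : ∃ u, finProdFinEquiv u = j := ⟨_, finProdFinEquiv.apply_symm_apply j⟩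
  simp only [scalarMulL, Matrix.of_apply]
  rw [← Equiv.sum_comp finProdFinEquiv, Fintype.sum_prod_type]
  simp [kronV, Matrix.mul_apply, Matrix.one_apply, smul_smul, ite_smul, mul_ite,
    Finset.sum_smul]

lemma scalarMulR_kron {k n m : ℕ} (X Q : Matrix (Fin k) (Fin k) ℂ)
    (b : Matrix (Fin n) (Fin m) V) :
    scalarMulR (kronV X b) (kronV Q (1 : Matrix (Fin m) (Fin m) ℂ)) = kronV (X * Q) b := by
  ext i j
  obtain ⟨⟨p, x⟩, rfl⟩ : ∃ u, finProdFinEquiv u = i := ⟨_, finProdFinEquiv.apply_symm_apply i⟩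
  obtain ⟨⟨q, y⟩, rfl⟩ : ∃ u, finProdFinEquiv u = j := ⟨_, finProdFinEquiv.apply_symm_apply j⟩
  simp only [scalarMulR, Matrix.of_apply]
  rw [← Equiv.sum_comp finProdFinEquiv, Fintype.sum_prod_type]
  simp [kronV, Matrix.mul_apply, Matrix.one_apply, smul_smul, ite_smul, mul_ite,
    Finset.sum_smul, mul_comm]

lemma kronV_one_one {k n : ℕ} :
    kronV (1 : Matrix (Fin k) (Fin k) ℂ) (1 : Matrix (Fin n) (Fin n) ℂ)
      = (1 : Matrix (Fin (k * n)) (Fin (k * n)) ℂ) := by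
  ext i j
  obtain ⟨⟨p, x⟩, rfl⟩ : ∃ u, finProdFinEquiv u = i := ⟨_, finProdFinEquiv.apply_symm_apply i⟩
  obtain ⟨⟨q, y⟩, rfl⟩ : ∃ u, finProdFinEquiv u = j := ⟨_, finProdFinEquiv.apply_symm_apply j⟩
  by_cases h : p = q ∧ x = y
  · obtain ⟨rfl, rfl⟩ := h
    simp [kronV, Matrix.one_apply]
  · have hne : finProdFinEquiv (p, x) ≠ finProdFinEquiv (q, y) := by
      simp only [ne_eq, Equiv.apply_eq_iff_eq, Prod.mk.injEq]
      exact h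
    rw [Matrix.one_apply_ne hne]
    simp only [kronV, Matrix.reindex_apply, Matrix.submatrix_apply, Equiv.symm_apply_apply,
      Matrix.of_apply]
    rcases Decidable.em (p = q) with hpq | hpq
    · have hxy : x ≠ y := fun hh => h ⟨hpq, hh⟩
      simp [Matrix.one_apply_ne hxy]
    · simp [Matrix.one_apply_ne hpq]

lemma kronV_conjTranspose {k n : ℕ} (P : Matrix (Fin k) (Fin k) ℂ)
    (B : Matrix (Fin n) (Fin n) ℂ) : (kronV P B)ᴴ = kronV Pᴴ Bᴴ := by
  ext i j
  obtain ⟨⟨p, x⟩, rfl⟩ : ∃ u, finProdFinEquiv u = i := ⟨_, finProdFinEquiv.apply_symm_apply i⟩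
  obtain ⟨⟨q, y⟩, rfl⟩ : ∃ u, finProdFinEquiv u = j := ⟨_, finProdFinEquiv.apply_symm_apply j⟩
  simp [kronV, Matrix.conjTranspose_apply, star_mul', mul_comm]

lemma kron_one_mem_unitaryGroup {k n : ℕ} {P : Matrix (Fin k) (Fin k) ℂ}
    (hP : P ∈ Matrix.unitaryGroup (Fin k) ℂ) :
    kronV P (1 : Matrix (Fin n) (Fin n) ℂ) ∈ Matrix.unitaryGroup (Fin (k * n)) ℂ := by
  rw [Matrix.mem_unitaryGroup_iff, Matrix.star_eq_conjTranspose, kronV_conjTranspose,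
    Matrix.conjTranspose_one, ← scalarMulL_eq_mul, scalarMulL_kron]
  rw [Matrix.mem_unitaryGroup_iff, Matrix.star_eq_conjTranspose] at hP
  rw [hP, kronV_one_one]

lemma blkV_apply {n m : ℕ} (A : Matrix (Fin n) (Fin n) V) (B : Matrix (Fin n) (Fin m) V)
    (C : Matrix (Fin m) (Fin m) V) (u v : Fin n ⊕ Fin m) :
    blkV A B C (finSumFinEquiv u) (finSumFinEquiv v) = Matrix.fromBlocks A B 0 C u v := by
  simp [blkV]

lemma scalarMulL_blkV {n' m' : ℕ} (P : Matrix (Fin n') (Fin n') ℂ)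
    (Q : Matrix (Fin m') (Fin m') ℂ) (A : Matrix (Fin n') (Fin n') V)
    (B : Matrix (Fin n') (Fin m') V) (C : Matrix (Fin m') (Fin m') V) :
    scalarMulL (blkV P (0 : Matrix (Fin n') (Fin m') ℂ) Q) (blkV A B C)
      = blkV (scalarMulL P A) (scalarMulL P B) (scalarMulL Q C) := by
  ext i j
  obtain ⟨u, rfl⟩ : ∃ u, finSumFinEquiv u = i := ⟨finSumFinEquiv.symm i, by simp⟩
  obtain ⟨v, rfl⟩ : ∃ v, finSumFinEquiv v = j := ⟨finSumFinEquiv.symm j, by simp⟩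
  simp only [scalarMulL, Matrix.of_apply, blkV_apply]
  rw [← Equiv.sum_comp finSumFinEquiv, Fintype.sum_sum_type]
  simp only [blkV_apply]
  rcases u with u | u <;> rcases v with v | v <;>
    simp [Matrix.fromBlocks, scalarMulL]

lemma scalarMulR_blkV {n' m' : ℕ} (P : Matrix (Fin n') (Fin n') ℂ)
    (Q : Matrix (Fin m') (Fin m') ℂ) (A : Matrix (Fin n') (Fin n') V)
    (B : Matrix (Fin n') (Fin m') V) (C : Matrix (Fin m') (Fin m') V) :
    scalarMulR (blkV A B C) (blkV P (0 : Matrix (Fin n') (Fin m') ℂ) Q)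
      = blkV (scalarMulR A P) (scalarMulR B Q) (scalarMulR C Q) := by
  ext i j
  obtain ⟨u, rfl⟩ : ∃ u, finSumFinEquiv u = i := ⟨finSumFinEquiv.symm i, by simp⟩
  obtain ⟨v, rfl⟩ : ∃ v, finSumFinEquiv v = j := ⟨finSumFinEquiv.symm j, by simp⟩
  simp only [scalarMulR, Matrix.of_apply, blkV_apply]
  rw [← Equiv.sum_comp finSumFinEquiv, Fintype.sum_sum_type]
  simp only [blkV_apply]
  rcases u with u | u <;> rcases v with v | v <;>
    simp [Matrix.fromBlocks, scalarMulR]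

lemma blkV_conjTranspose {n' m' : ℕ} (P : Matrix (Fin n') (Fin n') ℂ)
    (Q : Matrix (Fin m') (Fin m') ℂ) :
    (blkV P (0 : Matrix (Fin n') (Fin m') ℂ) Q)ᴴ = blkV Pᴴ 0 Qᴴ := by
  ext i j
  obtain ⟨u, rfl⟩ : ∃ u, finSumFinEquiv u = i := ⟨finSumFinEquiv.symm i, by simp⟩
  obtain ⟨v, rfl⟩ : ∃ v, finSumFinEquiv v = j := ⟨finSumFinEquiv.symm j, by simp⟩
  rw [Matrix.conjTranspose_apply, blkV_apply, blkV_apply]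
  rcases u with u | u <;> rcases v with v | v <;> simp [Matrix.fromBlocks]

lemma blkV_one {n' m' : ℕ} :
    blkV (1 : Matrix (Fin n') (Fin n') ℂ) 0 (1 : Matrix (Fin m') (Fin m') ℂ) = 1 := by
  rw [blkV, Matrix.fromBlocks_one]
  ext i j
  simp [Matrix.one_apply]

lemma blkV_mem_unitaryGroup {n' m' : ℕ} {P : Matrix (Fin n') (Fin n') ℂ}
    {Q : Matrix (Fin m') (Fin m') ℂ} (hP : P ∈ Matrix.unitaryGroup (Fin n') ℂ)
    (hQ : Q ∈ Matrix.unitaryGroup (Fin m') ℂ) :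
    blkV P (0 : Matrix (Fin n') (Fin m') ℂ) Q ∈ Matrix.unitaryGroup (Fin (n' + m')) ℂ := by
  rw [Matrix.mem_unitaryGroup_iff, Matrix.star_eq_conjTranspose] at hP hQ
  rw [Matrix.mem_unitaryGroup_iff, Matrix.star_eq_conjTranspose, blkV_conjTranspose,
    ← scalarMulL_eq_mul, scalarMulL_blkV, scalarMulL_zero,
    scalarMulL_eq_mul P Pᴴ, scalarMulL_eq_mul Q Qᴴ, hP, hQ, blkV_one]


/-- `k`-fold block-diagonal direct sum of matrices over `V`. -/
def bigV {k r : ℕ} (f : Fin k → Matrix (Fin r) (Fin r) V) :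
    Matrix (Fin (k * r)) (Fin (k * r)) V :=
  Matrix.reindex finProdFinEquiv finProdFinEquiv
    (Matrix.of fun i j => if i.1 = j.1 then f i.1 i.2 j.2 else 0)

lemma bigV_apply {k r : ℕ} (f : Fin k → Matrix (Fin r) (Fin r) V) (p q : Fin k) (x y : Fin r) :
    bigV f (finProdFinEquiv (p, x)) (finProdFinEquiv (q, y)) = if p = q then f p x y else 0 := by
  simp [bigV]

/-- splitting off the first block -/
def succEquiv (k r : ℕ) : (Fin r ⊕ Fin k × Fin r) ≃ (Fin (k + 1) × Fin r) where
  toFun u := Sum.elim (fun x => ((0 : Fin (k+1)), x)) (fun px => (px.1.succ, px.2)) u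
  invFun v := Fin.cases (Sum.inl v.2) (fun p => Sum.inr (p, v.2)) v.1
  left_inv := by rintro (x | ⟨p, x⟩) <;> simp
  right_inv := by
    rintro ⟨q, y⟩
    refine Fin.cases ?_ ?_ q <;> simp

lemma D0_mem (huni : UnitaryInvariant D) (hconv : ConverseDirectSums D) {p : ℕ}
    {a : Matrix (Fin p) (Fin p) V} (ha : a ∈ D p) (M0 : Matrix (Fin 0) (Fin 0) V) :
    M0 ∈ D 0 := by
  have h1 : Matrix.reindex (Equiv.sumEmpty (Fin p) (Fin 0)) (Equiv.sumEmpty (Fin p) (Fin 0))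
      (Matrix.fromBlocks a 0 0 M0) = a := by
    ext i j
    simp
  have h2 : blkV a 0 M0 ∈ D (p + 0) := by
    rw [blkV, mem_reindex_iff huni finSumFinEquiv (Equiv.sumEmpty (Fin p) (Fin 0)), h1]
    exact ha
  exact (hconv _ _ h2).2

lemma bigV_mem_iff (hds : RespectsDirectSums D) (huni : UnitaryInvariant D)
    (hconv : ConverseDirectSums D) (hD0 : ∀ M0 : Matrix (Fin 0) (Fin 0) V, M0 ∈ D 0)
    {r : ℕ} : ∀ {k : ℕ} (f : Fin k → Matrix (Fin r) (Fin r) V),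
    (bigV f ∈ D (k * r) ↔ ∀ p, f p ∈ D r) := by
  intro k
  induction k with
  | zero =>
    intro f
    constructor
    · intro _ p
      exact absurd p.2 (by simp)
    · intro _
      rw [bigV, mem_reindex_iff huni finProdFinEquiv
        (Equiv.equivOfIsEmpty (Fin 0 × Fin r) (Fin 0))]
      exact hD0 _
  | succ k ih =>
    intro f
    have key : Matrix.reindex ((succEquiv k r).symm.trans
          ((Equiv.sumCongr (Equiv.refl (Fin r)) finProdFinEquiv).trans finSumFinEquiv))
          ((succEquiv k r).symm.trans
          ((Equiv.sumCongr (Equiv.refl (Fin r)) finProdFinEquiv).trans finSumFinEquiv))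
          (Matrix.of fun (i j : Fin (k+1) × Fin r) => if i.1 = j.1 then f i.1 i.2 j.2 else 0)
        = blkV (f 0) 0 (bigV fun p => f p.succ) := by
      ext i j
      obtain ⟨u, rfl⟩ : ∃ u, finSumFinEquiv u = i := ⟨finSumFinEquiv.symm i, by simp⟩
      obtain ⟨v, rfl⟩ : ∃ v, finSumFinEquiv v = j := ⟨finSumFinEquiv.symm j, by simp⟩
      rw [blkV_apply]
      rcases u with x | w
      · rcases v with y | w'
        · simp [succEquiv, Matrix.fromBlocks]
        · obtain ⟨⟨q, y⟩, rfl⟩ : ∃ u, finProdFinEquiv u = w' :=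
            ⟨_, finProdFinEquiv.apply_symm_apply w'⟩
          simp [succEquiv, Matrix.fromBlocks, (Fin.succ_ne_zero q).symm]
      · obtain ⟨⟨p, x⟩, rfl⟩ : ∃ u, finProdFinEquiv u = w :=
          ⟨_, finProdFinEquiv.apply_symm_apply w⟩
        rcases v with y | w'
        · simp [succEquiv, Matrix.fromBlocks, Fin.succ_ne_zero p]
        · obtain ⟨⟨q, y⟩, rfl⟩ : ∃ u, finProdFinEquiv u = w' :=
            ⟨_, finProdFinEquiv.apply_symm_apply w'⟩
          simp only [succEquiv, Matrix.fromBlocks, Matrix.reindex_apply, Matrix.submatrix_apply,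
            Equiv.symm_trans_apply, Equiv.symm_symm, Equiv.symm_apply_apply,
            Equiv.sumCongr_symm, Equiv.sumCongr_apply, Sum.map_inr, Sum.elim_inr,
            Matrix.of_apply, bigV_apply, Equiv.coe_fn_mk, Equiv.refl_symm, Equiv.coe_refl]
          simp only [Fin.succ_inj]
    have step : bigV f ∈ D ((k + 1) * r) ↔
        blkV (f 0) 0 (bigV fun p => f p.succ) ∈ D (r + k * r) := by
      rw [bigV, mem_reindex_iff huni finProdFinEquiv ((succEquiv k r).symm.trans
          ((Equiv.sumCongr (Equiv.refl (Fin r)) finProdFinEquiv).trans finSumFinEquiv)), key]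
    rw [step]
    constructor
    · intro h
      obtain ⟨h1, h2⟩ := hconv _ _ h
      intro p
      refine Fin.cases h1 (fun q => ?_) p
      exact (ih _).mp h2 q
    · intro h
      exact hds _ _ (h 0) ((ih _).mpr fun q => h q.succ)


lemma conj_kron_mem_iff (huni : UnitaryInvariant D) {k n m : ℕ}
    (a : Matrix (Fin n) (Fin n) V) (b : Matrix (Fin n) (Fin m) V)
    (c : Matrix (Fin m) (Fin m) V) {U W : Matrix (Fin k) (Fin k) ℂ}
    (hU : U ∈ Matrix.unitaryGroup (Fin k) ℂ) (hW : W ∈ Matrix.unitaryGroup (Fin k) ℂ)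
    (Y : Matrix (Fin k) (Fin k) ℂ) :
    blkV (kronV 1 a) (kronV Y b) (kronV 1 c) ∈ D (k * n + k * m) ↔
      blkV (kronV 1 a) (kronV (Uᴴ * Y * W) b) (kronV 1 c) ∈ D (k * n + k * m) := by
  set G : Matrix (Fin (k * n + k * m)) (Fin (k * n + k * m)) ℂ :=
    blkV (kronV Uᴴ 1) 0 (kronV Wᴴ 1) with hG
  have hGuni : G ∈ Matrix.unitaryGroup (Fin (k * n + k * m)) ℂ :=
    blkV_mem_unitaryGroup (kron_one_mem_unitaryGroup (conjTranspose_mem_unitaryGroup hU))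
      (kron_one_mem_unitaryGroup (conjTranspose_mem_unitaryGroup hW))
  have hU' : Uᴴ * U = 1 := by
    have := Matrix.mem_unitaryGroup_iff'.mp hU
    rwa [Matrix.star_eq_conjTranspose] at this
  have hW' : Wᴴ * W = 1 := by
    have := Matrix.mem_unitaryGroup_iff'.mp hW
    rwa [Matrix.star_eq_conjTranspose] at this
  have hconjG : scalarMulL G (scalarMulR (blkV (kronV 1 a) (kronV Y b) (kronV 1 c)) Gᴴ)
      = blkV (kronV 1 a) (kronV (Uᴴ * Y * W) b) (kronV 1 c) := by
    rw [hG, blkV_conjTranspose, kronV_conjTranspose, kronV_conjTranspose,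
      Matrix.conjTranspose_conjTranspose, Matrix.conjTranspose_one, Matrix.conjTranspose_one,
      scalarMulR_blkV, scalarMulR_kron, scalarMulR_kron, scalarMulR_kron,
      scalarMulL_blkV, scalarMulL_kron, scalarMulL_kron, scalarMulL_kron]
    simp [hU', hW', ← mul_assoc]
  rw [← hconjG, mem_conj_iff huni hGuni]

/-- distributing a product over a sum -/
def distribEquiv (k n m : ℕ) :
    (Fin k × (Fin n ⊕ Fin m)) ≃ ((Fin k × Fin n) ⊕ (Fin k × Fin m)) where
  toFun x := Sum.elim (fun u => Sum.inl (x.1, u)) (fun v => Sum.inr (x.1, v)) x.2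
  invFun w := Sum.elim (fun pu => (pu.1, Sum.inl pu.2)) (fun pv => (pv.1, Sum.inr pv.2)) w
  left_inv := by rintro ⟨p, u | v⟩ <;> simp
  right_inv := by rintro (⟨p, u⟩ | ⟨p, v⟩) <;> simp

lemma kron_blk_mem_iff (huni : UnitaryInvariant D) {k n m : ℕ}
    (a : Matrix (Fin n) (Fin n) V) (b : Matrix (Fin n) (Fin m) V)
    (c : Matrix (Fin m) (Fin m) V) (d : Fin k → ℂ) :
    blkV (kronV 1 a) (kronV (Matrix.diagonal d) b) (kronV 1 c) ∈ D (k * n + k * m) ↔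
      bigV (fun p => blkV a (d p • b) c) ∈ D (k * (n + m)) := by
  set core : Matrix (Fin k × (Fin n ⊕ Fin m)) (Fin k × (Fin n ⊕ Fin m)) V :=
    Matrix.of fun i j =>
      if i.1 = j.1 then Matrix.fromBlocks a (d i.1 • b) 0 c i.2 j.2 else 0 with hcore
  set E : (Fin k × (Fin n ⊕ Fin m)) ≃ Fin (k * n + k * m) :=
    (distribEquiv k n m).trans
      ((Equiv.sumCongr finProdFinEquiv finProdFinEquiv).trans finSumFinEquiv) with hE
  set E' : (Fin k × (Fin n ⊕ Fin m)) ≃ Fin (k * (n + m)) :=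
    (Equiv.prodCongr (Equiv.refl (Fin k)) finSumFinEquiv).trans finProdFinEquiv with hE'
  have claim1 : Matrix.reindex E E core
      = blkV (kronV 1 a) (kronV (Matrix.diagonal d) b) (kronV 1 c) := by
    ext i j
    obtain ⟨u, rfl⟩ : ∃ u, finSumFinEquiv u = i := ⟨finSumFinEquiv.symm i, by simp⟩
    obtain ⟨v, rfl⟩ : ∃ v, finSumFinEquiv v = j := ⟨finSumFinEquiv.symm j, by simp⟩
    rw [blkV_apply]
    rcases u with w | w <;>
      obtain ⟨⟨p, x⟩, rfl⟩ : ∃ u, finProdFinEquiv u = w :=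
        ⟨_, finProdFinEquiv.apply_symm_apply w⟩ <;>
      rcases v with w' | w' <;>
      obtain ⟨⟨q, y⟩, rfl⟩ : ∃ u, finProdFinEquiv u = w' :=
        ⟨_, finProdFinEquiv.apply_symm_apply w'⟩ <;>
      by_cases h : p = q <;>
      simp [hE, hcore, distribEquiv, kronV, Matrix.fromBlocks, Matrix.one_apply,
        Matrix.diagonal_apply, ite_smul, h]
  have claim2 : Matrix.reindex E' E' core = bigV (fun p => blkV a (d p • b) c) := by
    ext i j
    obtain ⟨⟨p, x⟩, rfl⟩ : ∃ u, finProdFinEquiv u = i := ⟨_, finProdFinEquiv.apply_symm_apply i⟩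
    obtain ⟨⟨q, y⟩, rfl⟩ : ∃ u, finProdFinEquiv u = j := ⟨_, finProdFinEquiv.apply_symm_apply j⟩
    obtain ⟨u, rfl⟩ : ∃ u, finSumFinEquiv u = x := ⟨finSumFinEquiv.symm x, by simp⟩
    obtain ⟨v, rfl⟩ : ∃ v, finSumFinEquiv v = y := ⟨finSumFinEquiv.symm y, by simp⟩
    rw [bigV_apply]
    simp only [hE', hcore, Matrix.reindex_apply, Matrix.submatrix_apply, Equiv.symm_trans_apply,
      Equiv.symm_apply_apply, Equiv.prodCongr_symm, Equiv.prodCongr_apply, Equiv.refl_symm,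
      Equiv.coe_refl, Prod.map_apply, id_eq, Matrix.of_apply]
    by_cases h : p = q
    · subst h
      simp [blkV_apply]
    · simp [h]
  rw [← claim1, ← claim2, mem_reindex_iff huni E E']


open scoped ComplexOrder in
lemma exists_svd {k : ℕ} (Z : Matrix (Fin k) (Fin k) ℂ) :
    ∃ (U W : Matrix (Fin k) (Fin k) ℂ) (σ : Fin k → ℝ),
      U ∈ Matrix.unitaryGroup (Fin k) ℂ ∧ W ∈ Matrix.unitaryGroup (Fin k) ℂ ∧
      (∀ p, 0 ≤ σ p) ∧ Z = U * Matrix.diagonal (fun p => (σ p : ℂ)) * Wᴴ := by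
  classical
  have hH : (Zᴴ * Z).PosSemidef := Matrix.posSemidef_conjTranspose_mul_self Z
  have hHer : (Zᴴ * Z).IsHermitian := hH.1
  set d : Fin k → ℝ := hHer.eigenvalues with hd_def
  have hd : ∀ p, 0 ≤ d p := fun p => hH.eigenvalues_nonneg p
  set W : Matrix (Fin k) (Fin k) ℂ := (hHer.eigenvectorUnitary : Matrix (Fin k) (Fin k) ℂ)
    with hW_def
  have hW : W ∈ Matrix.unitaryGroup (Fin k) ℂ := (hHer.eigenvectorUnitary).2
  have hWW : Wᴴ * W = 1 := by
    have := Matrix.mem_unitaryGroup_iff'.mp hW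
    rwa [Matrix.star_eq_conjTranspose] at this
  have hWW' : W * Wᴴ = 1 := by
    have := Matrix.mem_unitaryGroup_iff.mp hW
    rwa [Matrix.star_eq_conjTranspose] at this
  set DD : Matrix (Fin k) (Fin k) ℂ := Matrix.diagonal (fun p => (d p : ℂ)) with hDD_def
  have hspec : Zᴴ * Z = W * DD * Wᴴ := by
    have h1 := hHer.spectral_theorem
    rw [Unitary.conjStarAlgAut_apply, Matrix.star_eq_conjTranspose] at h1
    exact h1
  set B : Matrix (Fin k) (Fin k) ℂ := Z * W with hB_def
  have hBB : Bᴴ * B = DD := by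
    rw [hB_def, Matrix.conjTranspose_mul]
    calc Wᴴ * Zᴴ * (Z * W) = Wᴴ * (Zᴴ * Z) * W := by
          rw [mul_assoc, ← mul_assoc Zᴴ Z W, ← mul_assoc]
    _ = Wᴴ * (W * DD * Wᴴ) * W := by rw [hspec]
    _ = (Wᴴ * W) * DD * (Wᴴ * W) := by
          simp only [mul_assoc]
    _ = DD := by rw [hWW, one_mul, mul_one]
  set σ : Fin k → ℝ := fun p => Real.sqrt (d p) with hσ_def
  have hσ : ∀ p, 0 ≤ σ p := fun p => Real.sqrt_nonneg _
  have hσne : ∀ p, d p ≠ 0 → σ p ≠ 0 := by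
    intro p hp
    simp only [hσ_def]
    exact Real.sqrt_ne_zero'.mpr (lt_of_le_of_ne (hd p) (Ne.symm hp))
  set f : Fin k → EuclideanSpace ℂ (Fin k) :=
    fun p => (WithLp.equiv 2 _).symm (fun j => B j p) with hf_def
  have hfB : ∀ p j, f p j = B j p := fun p j => rfl
  have hinner : ∀ p q, (inner ℂ (f p) (f q) : ℂ) = DD p q := by
    intro p q
    rw [← hBB, PiLp.inner_apply]
    simp only [RCLike.inner_apply]
    rw [Matrix.mul_apply]
    refine Finset.sum_congr rfl fun j _ => ?_
    rw [Matrix.conjTranspose_apply, hfB, hfB]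
    simp [RCLike.star_def, mul_comm]
  set v : Fin k → EuclideanSpace ℂ (Fin k) := fun p => ((σ p : ℂ))⁻¹ • f p with hv_def
  have horth : Orthonormal ℂ (Set.restrict {p | d p ≠ 0} v) := by
    rw [orthonormal_iff_ite]
    rintro ⟨p, hp⟩ ⟨q, hq⟩
    have hp' : d p ≠ 0 := hp
    change inner ℂ (v p) (v q) = _
    rw [hv_def]
    simp only [inner_smul_left, inner_smul_right, map_inv₀, Complex.conj_ofReal]
    rw [hinner p q]
    by_cases hpq : p = q
    · subst hpq
      rw [if_pos rfl, hDD_def, Matrix.diagonal_apply_eq]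
      have hsq : (σ p : ℝ) * σ p = d p := Real.mul_self_sqrt (hd p)
      have hσC : ((σ p : ℂ)) ≠ 0 := by exact_mod_cast hσne p hp'
      rw [← hsq]
      push_cast
      field_simp
    · rw [if_neg (by simp [hpq]), hDD_def, Matrix.diagonal_apply_ne _ hpq]
      simp
  obtain ⟨u, hu⟩ := horth.exists_orthonormalBasis_extension_of_card_eq
    (by simp [finrank_euclideanSpace])
  set U : Matrix (Fin k) (Fin k) ℂ := Matrix.of (fun i p => u p i) with hU_def
  have hUup : ∀ j p, U j p = u p j := fun j p => rfl
  have hUuni : U ∈ Matrix.unitaryGroup (Fin k) ℂ := by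
    rw [Matrix.mem_unitaryGroup_iff', Matrix.star_eq_conjTranspose]
    ext p q
    have horth2 := (orthonormal_iff_ite.mp u.orthonormal) p q
    rw [PiLp.inner_apply] at horth2
    simp only [RCLike.inner_apply] at horth2
    rw [Matrix.mul_apply, Matrix.one_apply]
    rw [← horth2]
    refine Finset.sum_congr rfl fun r _ => ?_
    rw [Matrix.conjTranspose_apply, hUup, hUup]
    simp [RCLike.star_def, mul_comm]
  have hfzero : ∀ p, d p = 0 → f p = 0 := by
    intro p hp
    have h0 : (inner ℂ (f p) (f p) : ℂ) = 0 := by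
      rw [hinner p p, hDD_def, Matrix.diagonal_apply_eq, hp]
      simp
    exact inner_self_eq_zero.mp h0
  have hZW : B = U * Matrix.diagonal (fun p => (σ p : ℂ)) := by
    ext j p
    have hrhs : (U * Matrix.diagonal (fun p => (σ p : ℂ))) j p = U j p * (σ p : ℂ) := by
      rw [Matrix.mul_apply, Finset.sum_eq_single p]
      · rw [Matrix.diagonal_apply_eq]
      · intro q _ hq
        rw [Matrix.diagonal_apply_ne _ hq, mul_zero]
      · intro h
        exact absurd (Finset.mem_univ p) h
    rw [hrhs]
    by_cases hp : d p = 0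
    · have hσ0 : σ p = 0 := by simp [hσ_def, hp]
      have hBjp : B j p = 0 := by
        rw [← hfB p j, hfzero p hp]
        rfl
      rw [hBjp, hσ0]
      simp
    · have hup : u p = v p := hu p hp
      have hσC : ((σ p : ℂ)) ≠ 0 := by exact_mod_cast hσne p hp
      have hUjp : U j p = ((σ p : ℂ))⁻¹ * B j p := by
        rw [hUup, hup]
        show (((σ p : ℂ))⁻¹ • f p) j = ((σ p : ℂ))⁻¹ * B j p
        have : (((σ p : ℂ))⁻¹ • f p) j = ((σ p : ℂ))⁻¹ * f p j := rfl
        rw [this, hfB]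
      rw [hUjp]
      field_simp
  refine ⟨U, W, σ, hUuni, hW, hσ, ?_⟩
  calc Z = Z * (W * Wᴴ) := by rw [hWW', mul_one]
  _ = (Z * W) * Wᴴ := by rw [mul_assoc]
  _ = U * Matrix.diagonal (fun p => (σ p : ℂ)) * Wᴴ := by rw [← hB_def, hZW]


lemma toEuclideanCLM_diag_apply {k : ℕ} (w : Fin k → ℂ) (x : EuclideanSpace ℂ (Fin k))
    (i : Fin k) :
    (Matrix.toEuclideanCLM (𝕜 := ℂ) (Matrix.diagonal w) x) i = w i * x i := by
  have h1 := congrFun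
    (Matrix.ofLp_toEuclideanCLM (𝕜 := ℂ) (n := Fin k) (Matrix.diagonal w) x) i
  exact h1.trans (by simp [Matrix.mulVec_diagonal])

lemma toEuclideanCLM_diag_norm_le {k : ℕ} (w : Fin k → ℂ) {t : ℝ} (ht : 0 ≤ t)
    (hb : ∀ p, ‖w p‖ ≤ t) :
    ‖Matrix.toEuclideanCLM (𝕜 := ℂ) (Matrix.diagonal w)‖ ≤ t := by
  refine ContinuousLinearMap.opNorm_le_bound _ ht fun x => ?_
  rw [EuclideanSpace.norm_eq, EuclideanSpace.norm_eq]
  simp only [toEuclideanCLM_diag_apply]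
  rw [show t * Real.sqrt (∑ i, ‖x i‖ ^ 2) = Real.sqrt (t ^ 2 * ∑ i, ‖x i‖ ^ 2) by
    rw [Real.sqrt_mul (sq_nonneg t), Real.sqrt_sq ht]]
  apply Real.sqrt_le_sqrt
  rw [Finset.mul_sum]
  apply Finset.sum_le_sum
  intro i _
  rw [norm_mul, mul_pow]
  exact mul_le_mul_of_nonneg_right (pow_le_pow_left₀ (norm_nonneg _) (hb i) 2) (sq_nonneg _)

lemma toEuclideanCLM_diag_norm_ge {k : ℕ} (w : Fin k → ℂ) (p : Fin k) :
    ‖w p‖ ≤ ‖Matrix.toEuclideanCLM (𝕜 := ℂ) (Matrix.diagonal w)‖ := by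
  set x : EuclideanSpace ℂ (Fin k) := EuclideanSpace.single p (1 : ℂ) with hx
  have hfx : Matrix.toEuclideanCLM (𝕜 := ℂ) (Matrix.diagonal w) x
      = EuclideanSpace.single p (w p) := by
    refine PiLp.ext fun i => ?_
    rw [toEuclideanCLM_diag_apply]
    rw [hx]
    by_cases h : i = p
    · subst h
      simp [EuclideanSpace.single_apply]
    · simp [EuclideanSpace.single_apply, h]
  calc ‖w p‖ = ‖Matrix.toEuclideanCLM (𝕜 := ℂ) (Matrix.diagonal w) x‖ := by
        rw [hfx, EuclideanSpace.norm_single]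
  _ ≤ ‖Matrix.toEuclideanCLM (𝕜 := ℂ) (Matrix.diagonal w)‖ * ‖x‖ :=
        ContinuousLinearMap.le_opNorm _ _
  _ = ‖Matrix.toEuclideanCLM (𝕜 := ℂ) (Matrix.diagonal w)‖ := by
        rw [hx, EuclideanSpace.norm_single, norm_one, mul_one]

lemma norm_toEuclideanCLM_conj {k : ℕ} {U : Matrix (Fin k) (Fin k) ℂ}
    (hU : U ∈ Matrix.unitaryGroup (Fin k) ℂ) (A : Matrix (Fin k) (Fin k) ℂ) :
    ‖Matrix.toEuclideanCLM (𝕜 := ℂ) (U * A * Uᴴ)‖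
      = ‖Matrix.toEuclideanCLM (𝕜 := ℂ) A‖ := by
  set u := Matrix.toEuclideanCLM (𝕜 := ℂ) U with hu_def
  have hu : u ∈ unitary (EuclideanSpace ℂ (Fin k) →L[ℂ] EuclideanSpace ℂ (Fin k)) := by
    have h1 := Matrix.mem_unitaryGroup_iff'.mp hU
    have h2 := Matrix.mem_unitaryGroup_iff.mp hU
    rw [Unitary.mem_iff, hu_def, ← map_star, ← _root_.map_mul, ← _root_.map_mul, h1, h2]
    constructor <;> exact map_one _
  have hUh : Matrix.toEuclideanCLM (𝕜 := ℂ) Uᴴ = star u := by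
    rw [hu_def, ← map_star, Matrix.star_eq_conjTranspose]
  rw [_root_.map_mul, _root_.map_mul, hUh, ← hu_def]
  calc ‖u * Matrix.toEuclideanCLM (𝕜 := ℂ) A * star u‖
      = ‖u * (Matrix.toEuclideanCLM (𝕜 := ℂ) A * star u)‖ := by rw [mul_assoc]
  _ = ‖Matrix.toEuclideanCLM (𝕜 := ℂ) A * star u‖ :=
      CStarRing.norm_coe_unitary_mul (⟨u, hu⟩ : unitary _) _
  _ = ‖Matrix.toEuclideanCLM (𝕜 := ℂ) A‖ :=
      CStarRing.norm_mul_coe_unitary _ (⟨star u, Unitary.star_mem hu⟩ : unitary _)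

lemma sqrt_norm_ZZh {k : ℕ} {Z U W : Matrix (Fin k) (Fin k) ℂ} {σ : Fin k → ℝ}
    (hU : U ∈ Matrix.unitaryGroup (Fin k) ℂ) (hW : W ∈ Matrix.unitaryGroup (Fin k) ℂ)
    (hσ : ∀ p, 0 ≤ σ p) (hZ : Z = U * Matrix.diagonal (fun p => (σ p : ℂ)) * Wᴴ)
    (pmax : Fin k) (hmax : ∀ p, σ p ≤ σ pmax) :
    Real.sqrt ‖Matrix.toEuclideanCLM (𝕜 := ℂ) (Z * Zᴴ)‖ = σ pmax := by
  have hWW : Wᴴ * W = 1 := by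
    have := Matrix.mem_unitaryGroup_iff'.mp hW
    rwa [Matrix.star_eq_conjTranspose] at this
  have hZZ : Z * Zᴴ = U * Matrix.diagonal (fun p => ((σ p * σ p : ℝ) : ℂ)) * Uᴴ := by
    rw [hZ]
    rw [Matrix.conjTranspose_mul, Matrix.conjTranspose_mul, Matrix.conjTranspose_conjTranspose,
      Matrix.diagonal_conjTranspose]
    have hstar : (star fun p => (σ p : ℂ)) = fun p => (σ p : ℂ) := by
      funext p
      simp [Complex.conj_ofReal]
    rw [hstar]
    calc U * Matrix.diagonal (fun p => (σ p : ℂ)) * Wᴴ *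
          (W * (Matrix.diagonal (fun p => (σ p : ℂ)) * Uᴴ))
        = U * (Matrix.diagonal (fun p => (σ p : ℂ)) * ((Wᴴ * W) *
            (Matrix.diagonal (fun p => (σ p : ℂ)) * Uᴴ))) := by
          simp only [mul_assoc]
    _ = U * (Matrix.diagonal (fun p => (σ p : ℂ)) * Matrix.diagonal (fun p => (σ p : ℂ))) * Uᴴ
          := by rw [hWW, one_mul]; simp only [mul_assoc]
    _ = U * Matrix.diagonal (fun p => ((σ p * σ p : ℝ) : ℂ)) * Uᴴ := by
          rw [Matrix.diagonal_mul_diagonal]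
          congr 1
          congr 1
          funext p
          push_cast
          ring
  have hnorm : ‖Matrix.toEuclideanCLM (𝕜 := ℂ) (Z * Zᴴ)‖ = σ pmax * σ pmax := by
    rw [hZZ, norm_toEuclideanCLM_conj hU]
    apply le_antisymm
    · apply toEuclideanCLM_diag_norm_le _ (mul_nonneg (hσ pmax) (hσ pmax))
      intro p
      have : ‖((σ p * σ p : ℝ) : ℂ)‖ = σ p * σ p := by
        rw [Complex.norm_real]
        exact abs_of_nonneg (mul_nonneg (hσ p) (hσ p))
      rw [this]
      exact mul_le_mul (hmax p) (hmax p) (hσ p) (hσ pmax)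
    · have h := toEuclideanCLM_diag_norm_ge (fun p => ((σ p * σ p : ℝ) : ℂ)) pmax
      have : ‖((σ pmax * σ pmax : ℝ) : ℂ)‖ = σ pmax * σ pmax := by
        rw [Complex.norm_real]
        exact abs_of_nonneg (mul_nonneg (hσ pmax) (hσ pmax))
      rwa [this] at h
  rw [hnorm, Real.sqrt_mul_self (hσ pmax)]

lemma norm_toEuclideanCLM_zero_dim (A : Matrix (Fin 0) (Fin 0) ℂ) :
    ‖Matrix.toEuclideanCLM (𝕜 := ℂ) A‖ = 0 := by
  have : Matrix.toEuclideanCLM (𝕜 := ℂ) A = 0 := by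
    refine ContinuousLinearMap.ext fun x => ?_
    exact Subsingleton.elim _ _
  rw [this, norm_zero]

lemma sSup_scale {S : Set ℝ≥0∞} {c : ℝ≥0∞} (hc0 : c ≠ 0) (hct : c ≠ ⊤) :
    sSup {t | t * c ∈ S} = sSup S / c := by
  apply le_antisymm
  · refine sSup_le fun t ht => ?_
    rw [ENNReal.le_div_iff_mul_le (Or.inl hc0) (Or.inl hct)]
    exact le_sSup ht
  · rw [ENNReal.sSup_div]
    refine iSup₂_le fun b hb => ?_
    refine le_sSup ?_
    show b / c * c ∈ S
    rw [ENNReal.div_mul_cancel hc0 hct]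
    exact hb

end NcAux

/- STATEMENT 8: δ_D(I_k ⊗ a, I_k ⊗ c)(Z ⊗ b) = δ_D(a,c)(b) · ‖Z Z*‖^{1/2},
where ‖·‖ is the operator (C*-) norm of the scalar matrix, so ‖ZZ*‖^{1/2} is the largest
singular value of Z. -/
theorem stmt_8 (D : ∀ n, Set (Matrix (Fin n) (Fin n) V))
    (hds : RespectsDirectSums D) (huni : UnitaryInvariant D) (hconv : ConverseDirectSums D)
    {n m k : ℕ} (a : Matrix (Fin n) (Fin n) V) (c : Matrix (Fin m) (Fin m) V)
    (b : Matrix (Fin n) (Fin m) V) (ha : a ∈ D n) (hc : c ∈ D m)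
    (Z : Matrix (Fin k) (Fin k) ℂ) :
    ncDelta D (kronV 1 a) (kronV 1 c) (kronV Z b)
      = ncDelta D a c b *
          ENNReal.ofReal (Real.sqrt ‖Matrix.toEuclideanCLM (𝕜 := ℂ) (Z * Zᴴ)‖) := by
  classical
  rcases Nat.eq_zero_or_pos k with hk | hk
  · subst hk
    have hnorm : ‖Matrix.toEuclideanCLM (𝕜 := ℂ) (Z * Zᴴ)‖ = 0 :=
      NcAux.norm_toEuclideanCLM_zero_dim _
    rw [hnorm, Real.sqrt_zero, ENNReal.ofReal_zero, mul_zero]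
    simp only [ncDelta]
    rw [ENNReal.inv_eq_zero]
    refine top_unique (le_sSup ?_)
    simp only [Set.mem_setOf_eq]
    intro s hs _
    rw [NcAux.mem_submatrix_iff huni (finCongr (show (0:ℕ) = 0 * n + 0 * m by simp))]
    exact NcAux.D0_mem huni hconv ha _
  · obtain ⟨U, W, σ, hU, hW, hσ, hZ⟩ := NcAux.exists_svd Z
    have hne : Nonempty (Fin k) := ⟨⟨0, hk⟩⟩
    obtain ⟨pmax, hmax⟩ := Finite.exists_max σ
    have hsqrt : Real.sqrt ‖Matrix.toEuclideanCLM (𝕜 := ℂ) (Z * Zᴴ)‖ = σ pmax :=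
      NcAux.sqrt_norm_ZZh hU hW hσ hZ pmax hmax
    rw [hsqrt]
    have hD0 : ∀ M0 : Matrix (Fin 0) (Fin 0) V, M0 ∈ D 0 := NcAux.D0_mem huni hconv ha
    have hUU : Uᴴ * U = 1 := by
      have := Matrix.mem_unitaryGroup_iff'.mp hU
      rwa [Matrix.star_eq_conjTranspose] at this
    have hWW : Wᴴ * W = 1 := by
      have := Matrix.mem_unitaryGroup_iff'.mp hW
      rwa [Matrix.star_eq_conjTranspose] at this
    have hchain : ∀ s : ℝ, 0 ≤ s →
        ((blkV (kronV 1 a) ((s:ℂ) • kronV Z b) (kronV 1 c) ∈ D (k * n + k * m)) ↔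
         ∀ p, blkV a (((s * σ p : ℝ) : ℂ) • b) c ∈ D (n + m)) := by
      intro s hs
      rw [NcAux.kronV_smul]
      rw [NcAux.conj_kron_mem_iff huni a b c hU hW ((s:ℂ) • Z)]
      have hY : Uᴴ * ((s:ℂ) • Z) * W = Matrix.diagonal (fun p => ((s * σ p : ℝ) : ℂ)) := by
        rw [hZ, mul_smul_comm, smul_mul_assoc]
        rw [show Uᴴ * (U * Matrix.diagonal (fun p => (σ p : ℂ)) * Wᴴ) * W
            = (Uᴴ * U) * Matrix.diagonal (fun p => (σ p : ℂ)) * (Wᴴ * W) by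
          simp only [mul_assoc]]
        rw [hUU, hWW, one_mul, mul_one]
        ext i j
        rcases eq_or_ne i j with rfl | h
        · simp only [Matrix.smul_apply, Matrix.diagonal_apply_eq, smul_eq_mul]
          push_cast
          ring
        · simp [Matrix.diagonal_apply_ne _ h]
      rw [hY]
      rw [NcAux.kron_blk_mem_iff huni a b c (fun p => ((s * σ p : ℝ) : ℂ))]
      rw [NcAux.bigV_mem_iff hds huni hconv hD0]
    simp only [ncDelta]
    by_cases hσ0 : σ pmax = 0
    · have hall : ∀ p, σ p = 0 := fun p => le_antisymm (hσ0 ▸ hmax p) (hσ p)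
      have hset : {t : ℝ≥0∞ | ∀ s : ℝ, 0 ≤ s → ENNReal.ofReal s ≤ t →
          blkV (kronV 1 a) ((s:ℂ) • kronV Z b) (kronV 1 c) ∈ D (k * n + k * m)}
          = Set.univ := by
        ext t
        simp only [Set.mem_setOf_eq, Set.mem_univ, iff_true]
        intro s hs _
        rw [hchain s hs]
        intro p
        rw [hall p]
        rw [show ((s * 0 : ℝ) : ℂ) • b = 0 by norm_num]
        exact hds a c ha hc
      rw [hset, hσ0]
      simp
    · set c0 : ℝ≥0∞ := ENNReal.ofReal (σ pmax) with hc0_def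
      have hσpos : 0 < σ pmax := lt_of_le_of_ne (hσ pmax) (Ne.symm hσ0)
      have hc0ne : c0 ≠ 0 := by
        rw [hc0_def, ne_eq, ENNReal.ofReal_eq_zero, not_le]
        exact hσpos
      have hc0top : c0 ≠ ⊤ := ENNReal.ofReal_ne_top
      have hsets : {t : ℝ≥0∞ | ∀ s : ℝ, 0 ≤ s → ENNReal.ofReal s ≤ t →
            blkV (kronV 1 a) ((s:ℂ) • kronV Z b) (kronV 1 c) ∈ D (k * n + k * m)}
          = {t : ℝ≥0∞ | t * c0 ∈ {u : ℝ≥0∞ | ∀ s : ℝ, 0 ≤ s → ENNReal.ofReal s ≤ u →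
            blkV a ((s:ℂ) • b) c ∈ D (n + m)}} := by
        ext t
        simp only [Set.mem_setOf_eq]
        constructor
        · intro h s' hs' hle'
          set s := s' / σ pmax with hs_def
          have hs : 0 ≤ s := div_nonneg hs' (le_of_lt hσpos)
          have hle : ENNReal.ofReal s ≤ t := by
            rw [hs_def, ENNReal.ofReal_div_of_pos hσpos, ← hc0_def,
              ENNReal.div_le_iff_le_mul (Or.inl hc0ne) (Or.inl hc0top)]
            exact hle'
          have h2 := (hchain s hs).mp (h s hs hle) pmax
          rw [show s * σ pmax = s' by rw [hs_def]; field_simp] at h2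
          exact h2
        · intro h s hs hle
          rw [hchain s hs]
          intro p
          apply h (s * σ p) (mul_nonneg hs (hσ p))
          calc ENNReal.ofReal (s * σ p)
              = ENNReal.ofReal s * ENNReal.ofReal (σ p) := ENNReal.ofReal_mul hs
          _ ≤ t * c0 := mul_le_mul' hle (ENNReal.ofReal_le_ofReal (hmax p))
      rw [hsets, NcAux.sSup_scale hc0ne hc0top,
        ENNReal.inv_div (Or.inl hc0top) (Or.inl hc0ne), div_eq_mul_inv, mul_comm]
end

section
/- Let A be a unital C*-algebra and n ∈ A positive invertible. For a ∈ A with Im a := (a−a*)/(2i) > 0, the following are equivalent: (1) a* (Im a)⁻¹ a ≤ n; (2) n^{-1/2} (Im a) n^{-1/2} + n^{-1/2} (Re a) (Im a)⁻¹ (Re a) n^{-1/2} ≤ 1; (3) Im(−a⁻¹) ≥ n⁻¹. -/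
/-- The real part `(x + x*)/2`. -/
noncomputable def cstarRe {A : Type*} [CStarAlgebra A] (x : A) : A :=
  ((2 : ℂ)⁻¹) • (x + star x)

/-- The imaginary part `(x - x*)/(2i)`. -/
noncomputable def cstarIm {A : Type*} [CStarAlgebra A] (x : A) : A :=
  ((2 * Complex.I)⁻¹ : ℂ) • (x - star x)

/-- `x > 0`: positive and invertible. -/
def posInv {A : Type*} [CStarAlgebra A] [PartialOrder A] (x : A) : Prop :=
  0 ≤ x ∧ IsUnit x

lemma cstarRe_isSelfAdjoint {A : Type*} [CStarAlgebra A] (x : A) : IsSelfAdjoint (cstarRe x) := by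
  unfold cstarRe
  rw [IsSelfAdjoint, star_smul, star_add, star_star]
  simp [add_comm]

lemma cstarIm_isSelfAdjoint {A : Type*} [CStarAlgebra A] (x : A) : IsSelfAdjoint (cstarIm x) := by
  unfold cstarIm
  rw [IsSelfAdjoint, star_smul, star_sub, star_star]
  have : (starRingEnd ℂ) ((2 * Complex.I)⁻¹ : ℂ) = -(2 * Complex.I)⁻¹ := by
    simp [Complex.ext_iff]
  rw [RCLike.star_def, this, neg_smul, smul_sub, smul_sub]
  abel

lemma cstar_decomp {A : Type*} [CStarAlgebra A] (x : A) :
    x = cstarRe x + Complex.I • cstarIm x := by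
  unfold cstarRe cstarIm
  rw [smul_smul]
  match_scalars <;> simp [Complex.ext_iff] <;> ring_nf <;> simp

lemma ringInverse_eq {M : Type*} [MonoidWithZero M] {a w : M} (h1 : a * w = 1) (h2 : w * a = 1) :
    Ring.inverse a = w :=
  Ring.inverse_unit ⟨a, w, h1, h2⟩

section main
variable {A : Type*} [CStarAlgebra A] [PartialOrder A] [StarOrderedRing A]

-- square root of a positive unit is a unit, with Ring.inverse facts
lemma sq_isUnit {r b : A} (hr : r * r = b) (hb : IsUnit b) : IsUnit r := by
  have h1 : r * (r * Ring.inverse b) = 1 := by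
    rw [← mul_assoc, hr, Ring.mul_inverse_cancel b hb]
  have h2 : (Ring.inverse b * r) * r = 1 := by
    rw [mul_assoc, hr, Ring.inverse_mul_cancel b hb]
  have h3 : Ring.inverse b * r = r * Ring.inverse b := by
    calc Ring.inverse b * r = (Ring.inverse b * r) * (r * (r * Ring.inverse b)) := by rw [h1, mul_one]
    _ = ((Ring.inverse b * r) * r) * (r * Ring.inverse b) := by noncomm_ring
    _ = r * Ring.inverse b := by rw [h2, one_mul]
  exact ⟨⟨r, r * Ring.inverse b, h1, by rw [← h3, h2]⟩, rfl⟩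

-- star of Ring.inverse of selfadjoint unit
lemma star_ringInverse {r : A} (hr : IsSelfAdjoint r) (hu : IsUnit r) :
    star (Ring.inverse r) = Ring.inverse r := by
  have h1 : star (Ring.inverse r) * r = 1 := by
    have h := congrArg star (Ring.mul_inverse_cancel r hu)
    rwa [star_mul, hr.star_eq, star_one] at h
  calc star (Ring.inverse r) = star (Ring.inverse r) * (r * Ring.inverse r) := by
        rw [Ring.mul_inverse_cancel r hu, mul_one]
    _ = Ring.inverse r := by rw [← mul_assoc, h1, one_mul]

lemma ringInverse_nonneg {b : A} (hb0 : 0 ≤ b) (hbU : IsUnit b) : 0 ≤ Ring.inverse b := by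
  have hsa : IsSelfAdjoint b := IsSelfAdjoint.of_nonneg hb0
  have : Ring.inverse b = star (Ring.inverse b) * b * Ring.inverse b := by
    rw [star_ringInverse hsa hbU, Ring.inverse_mul_cancel b hbU, one_mul]
  rw [this]
  exact star_left_conjugate_nonneg hb0 _
end main

section main2
variable {A : Type*} [CStarAlgebra A] [PartialOrder A] [StarOrderedRing A]

lemma cstar_star_decomp (a : A) : star a = cstarRe a - Complex.I • cstarIm a := by
  conv_lhs => rw [cstar_decomp a]
  rw [star_add, star_smul, (cstarRe_isSelfAdjoint a).star_eq, (cstarIm_isSelfAdjoint a).star_eq]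
  rw [RCLike.star_def]
  simp [sub_eq_add_neg]

lemma conj_expand (b c bi : A) (h1 : b * bi = 1) (h2 : bi * b = 1) :
    (c - Complex.I • b) * bi * (c + Complex.I • b) = b + c * bi * c := by
  have e1 : c * bi * (Complex.I • b) = Complex.I • c := by
    rw [mul_smul_comm, mul_assoc, h2, mul_one]
  have e2 : (Complex.I • b) * bi * c = Complex.I • c := by
    rw [smul_mul_assoc, smul_mul_assoc, h1, one_mul]
  have e3 : (Complex.I • b) * bi * (Complex.I • b) = (Complex.I * Complex.I) • b := by
    rw [smul_mul_assoc, mul_smul_comm, smul_mul_assoc, h1, one_mul, smul_smul]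
  rw [sub_mul, sub_mul, mul_add, mul_add, e1, e2, e3, Complex.I_mul_I, neg_one_smul]
  abel

lemma key_identity (a : A) (hbU : IsUnit (cstarIm a)) :
    star a * Ring.inverse (cstarIm a) * a
      = cstarIm a + cstarRe a * Ring.inverse (cstarIm a) * cstarRe a := by
  have h1 := Ring.mul_inverse_cancel (cstarIm a) hbU
  have h2 := Ring.inverse_mul_cancel (cstarIm a) hbU
  calc star a * Ring.inverse (cstarIm a) * a
      = (cstarRe a - Complex.I • cstarIm a) * Ring.inverse (cstarIm a)
          * (cstarRe a + Complex.I • cstarIm a) := by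
        rw [← cstar_star_decomp a, ← cstar_decomp a]
    _ = _ := conj_expand _ _ _ h1 h2


lemma isUnit_of_posIm (a : A) (hb0 : 0 ≤ cstarIm a) (hbU : IsUnit (cstarIm a)) : IsUnit a := by
  set b := cstarIm a with hb
  set c := cstarRe a with hc
  set r := CFC.sqrt b with hrdef
  have hrr : r * r = b := CFC.sqrt_mul_sqrt_self b hb0
  have hr0 : (0 : A) ≤ r := CFC.sqrt_nonneg _
  have hrU : IsUnit r := sq_isUnit hrr hbU
  set d := Ring.inverse r with hd
  have hrd : r * d = 1 := Ring.mul_inverse_cancel r hrU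
  have hdr : d * r = 1 := Ring.inverse_mul_cancel r hrU
  have hds : star d = d := star_ringInverse (IsSelfAdjoint.of_nonneg hr0) hrU
  set t := d * c * d with ht
  have hts : IsSelfAdjoint t := by
    rw [IsSelfAdjoint, ht, star_mul, star_mul, hds, (cstarRe_isSelfAdjoint a).star_eq, mul_assoc]
  have hU : IsUnit (t + Complex.I • (1 : A)) := by
    have hmem : (-Complex.I) ∉ spectrum ℂ t := by
      intro hmem
      have := hts.mem_spectrum_eq_re hmem
      simp [Complex.ext_iff] at this
    rw [spectrum.notMem_iff] at hmem
    have heq : t + Complex.I • (1 : A) = -(algebraMap ℂ A (-Complex.I) - t) := by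
      rw [Algebra.algebraMap_eq_smul_one, neg_smul, neg_sub, sub_neg_eq_add]
    rw [heq]
    exact hmem.neg
  have hfact : a = r * (t + Complex.I • (1 : A)) * r := by
    have : r * (t + Complex.I • (1 : A)) * r = (r * d) * c * (d * r) + Complex.I • (r * r) := by
      simp only [ht, mul_add, add_mul, mul_smul_comm, smul_mul_assoc, mul_one, one_mul, mul_assoc]
    rw [this, hrd, hdr, hrr, one_mul, mul_one]
    exact cstar_decomp a
  rw [hfact]
  exact (hrU.mul hU).mul hrU

lemma im_neg_ringInverse (a : A) (haU : IsUnit a) (hbU : IsUnit (cstarIm a)) :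
    cstarIm (-(Ring.inverse a)) = Ring.inverse (star a * Ring.inverse (cstarIm a) * a) := by
  have ha1 : a * Ring.inverse a = 1 := Ring.mul_inverse_cancel a haU
  have ha2 : Ring.inverse a * a = 1 := Ring.inverse_mul_cancel a haU
  have hs1 : star a * star (Ring.inverse a) = 1 := by rw [← star_mul, ha2, star_one]
  have hs2 : star (Ring.inverse a) * star a = 1 := by rw [← star_mul, ha1, star_one]
  have hb1 : cstarIm a * Ring.inverse (cstarIm a) = 1 := Ring.mul_inverse_cancel _ hbU
  have hb2 : Ring.inverse (cstarIm a) * cstarIm a = 1 := Ring.inverse_mul_cancel _ hbU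
  have hmw : (star a * Ring.inverse (cstarIm a) * a)
      * (Ring.inverse a * cstarIm a * star (Ring.inverse a)) = 1 := by
    simp only [mul_assoc]
    rw [← mul_assoc a, ha1, one_mul, ← mul_assoc (Ring.inverse (cstarIm a)), hb2, one_mul]
    exact hs1
  have hwm : (Ring.inverse a * cstarIm a * star (Ring.inverse a))
      * (star a * Ring.inverse (cstarIm a) * a) = 1 := by
    simp only [mul_assoc]
    rw [← mul_assoc (star (Ring.inverse a)), hs2, one_mul,
      ← mul_assoc (cstarIm a), hb1, one_mul]
    exact ha2
  rw [ringInverse_eq hmw hwm]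
  show cstarIm (-(Ring.inverse a)) = Ring.inverse a * cstarIm a * star (Ring.inverse a)
  unfold cstarIm
  rw [mul_smul_comm, smul_mul_assoc]
  congr 1
  rw [star_neg, mul_sub, sub_mul, ha2, one_mul, mul_assoc, hs1, mul_one]
  abel

end main2

theorem stmt_13 {A : Type*} [CStarAlgebra A] [PartialOrder A] [StarOrderedRing A]
    (n a : A) (hn : posInv n) (ha : posInv (cstarIm a)) :
    (star a * Ring.inverse (cstarIm a) * a ≤ n ↔
      invSqrt n * cstarIm a * invSqrt n +
        invSqrt n * cstarRe a * Ring.inverse (cstarIm a) * cstarRe a * invSqrt n ≤ 1) ∧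
    (star a * Ring.inverse (cstarIm a) * a ≤ n ↔
      Ring.inverse n ≤ cstarIm (-(Ring.inverse a))) := by
  obtain ⟨hn0, hnU⟩ := hn
  obtain ⟨hb0, hbU⟩ := ha
  have hkey := key_identity a hbU
  have hbi0 : (0 : A) ≤ Ring.inverse (cstarIm a) := ringInverse_nonneg hb0 hbU
  have hm0 : (0 : A) ≤ star a * Ring.inverse (cstarIm a) * a := star_left_conjugate_nonneg hbi0 a
  have haU : IsUnit a := isUnit_of_posIm a hb0 hbU
  have hbiU : IsUnit (Ring.inverse (cstarIm a)) :=
    ⟨⟨Ring.inverse (cstarIm a), cstarIm a, Ring.inverse_mul_cancel _ hbU,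
      Ring.mul_inverse_cancel _ hbU⟩, rfl⟩
  have hmU : IsUnit (star a * Ring.inverse (cstarIm a) * a) := (haU.star.mul hbiU).mul haU
  constructor
  · -- (1) ↔ (2)
    have hqq : CFC.sqrt n * CFC.sqrt n = n := CFC.sqrt_mul_sqrt_self n hn0
    have hq0 : (0 : A) ≤ CFC.sqrt n := CFC.sqrt_nonneg _
    have hqU : IsUnit (CFC.sqrt n) := sq_isUnit hqq hnU
    have hqs : IsSelfAdjoint (CFC.sqrt n) := IsSelfAdjoint.of_nonneg hq0
    have hpq : invSqrt n * CFC.sqrt n = 1 := Ring.inverse_mul_cancel _ hqU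
    have hqp : CFC.sqrt n * invSqrt n = 1 := Ring.mul_inverse_cancel _ hqU
    have hps : IsSelfAdjoint (invSqrt n) := by
      rw [IsSelfAdjoint]
      exact star_ringInverse hqs hqU
    have hsum : invSqrt n * cstarIm a * invSqrt n +
        invSqrt n * cstarRe a * Ring.inverse (cstarIm a) * cstarRe a * invSqrt n
        = invSqrt n * (star a * Ring.inverse (cstarIm a) * a) * invSqrt n := by
      rw [hkey]
      noncomm_ring
    rw [hsum]
    constructor
    · intro h
      calc invSqrt n * (star a * Ring.inverse (cstarIm a) * a) * invSqrt n
          ≤ invSqrt n * n * invSqrt n := hps.conjugate_le_conjugate h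
        _ = 1 := by
            nth_rewrite 2 [← hqq]
            rw [← mul_assoc, hpq, one_mul, hqp]
    · intro h
      have h2 := hqs.conjugate_le_conjugate h
      calc star a * Ring.inverse (cstarIm a) * a
          = CFC.sqrt n * (invSqrt n * (star a * Ring.inverse (cstarIm a) * a) * invSqrt n)
            * CFC.sqrt n := by
            rw [← mul_assoc, ← mul_assoc, hqp, one_mul, mul_assoc, mul_assoc, hpq, mul_one]
        _ ≤ CFC.sqrt n * 1 * CFC.sqrt n := h2
        _ = n := by rw [mul_one, hqq]
  · -- (1) ↔ (3)
    rw [im_neg_ringInverse a haU hbU]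
    have hn' : Ring.inverse n = ((hnU.unit⁻¹ : Aˣ) : A) := by
      conv_lhs => rw [← IsUnit.unit_spec hnU, Ring.inverse_unit]
    have hm' : Ring.inverse (star a * Ring.inverse (cstarIm a) * a) = ((hmU.unit⁻¹ : Aˣ) : A) := by
      conv_lhs => rw [← IsUnit.unit_spec hmU, Ring.inverse_unit]
    rw [hn', hm']
    have := CStarAlgebra.inv_le_inv_iff (a := hnU.unit) (b := hmU.unit)
      (by rwa [IsUnit.unit_spec]) (by rwa [IsUnit.unit_spec])
    rw [IsUnit.unit_spec, IsUnit.unit_spec] at this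
    exact this.symm
end

section
/- Let A be a unital C*-algebra and a = m + i n with m = m* and n > 0 (positive invertible). Then a is invertible and Im(a⁻¹) = −(m n⁻¹ m + n)⁻¹ < 0 and Re(a⁻¹) = n⁻¹ m (m n⁻¹ m + n)⁻¹. -/
/- STATEMENT 14: if a = m + i n with m self-adjoint and n positive invertible, then
a is invertible, Im(a⁻¹) = -(m n⁻¹ m + n)⁻¹ < 0 and Re(a⁻¹) = n⁻¹ m (m n⁻¹ m + n)⁻¹. -/
theorem stmt_14 {A : Type*} [CStarAlgebra A] [PartialOrder A] [StarOrderedRing A]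
    (m n : A) (hm : IsSelfAdjoint m) (hn : posInv n) :
    IsUnit (m + Complex.I • n) ∧
    posInv (m * Ring.inverse n * m + n) ∧
    cstarIm (Ring.inverse (m + Complex.I • n))
      = -Ring.inverse (m * Ring.inverse n * m + n) ∧
    cstarRe (Ring.inverse (m + Complex.I • n))
      = Ring.inverse n * m * Ring.inverse (m * Ring.inverse n * m + n) := by
  obtain ⟨hn0, hnu⟩ := hn
  set n' := Ring.inverse n with hn'
  have hnn' : n * n' = 1 := Ring.mul_inverse_cancel n hnu
  have hnsa : IsSelfAdjoint n := .of_nonneg hn0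
  have hn'sa : IsSelfAdjoint n' := by
    have : star n' = n' := by rw [hn', ← Ring.inverse_star, hnsa.star_eq]
    exact this
  have hn'0 : 0 ≤ n' := by
    have := star_left_conjugate_nonneg hn0 n'
    rwa [hn'sa.star_eq, mul_assoc, hnn', mul_one] at this
  have hmn'm : 0 ≤ m * n' * m := by
    have := star_left_conjugate_nonneg hn'0 m
    rwa [hm.star_eq] at this
  set k := m * n' * m + n with hk
  have hk0 : 0 ≤ k := add_nonneg hmn'm hn0
  have hku : IsUnit k := CStarAlgebra.isUnit_of_le n (le_add_of_nonneg_left hmn'm) (IsStrictlyPositive.iff_of_unital.mpr ⟨hn0, hnu⟩)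
  have hksa : IsSelfAdjoint k := .of_nonneg hk0
  set k' := Ring.inverse k with hk'
  have hkk' : k * k' = 1 := Ring.mul_inverse_cancel k hku
  have hk'sa : IsSelfAdjoint k' := by
    have : star k' = k' := by rw [hk', ← Ring.inverse_star, hksa.star_eq]
    exact this
  set a := m + Complex.I • n with ha
  set b := n' * m * k' - Complex.I • k' with hb
  set c := n' * m * k' + Complex.I • k' with hc
  -- key identities
  have key1 : ∀ s : A, a * (n' * m * s - Complex.I • s) = k * s := by
    intro s
    have h1 : n * (n' * (m * s)) = m * s := by rw [← mul_assoc, hnn', one_mul]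
    simp only [ha, hk, add_mul, mul_sub, smul_mul_assoc, mul_smul_comm, smul_smul,
      Complex.I_mul_I, neg_smul, one_smul, sub_neg_eq_add, mul_assoc, h1]
    match_scalars <;> simp [Complex.I_sq]
  have key2 : ∀ s : A, (m - Complex.I • n) * (n' * m * s + Complex.I • s) = k * s := by
    intro s
    have h1 : n * (n' * (m * s)) = m * s := by rw [← mul_assoc, hnn', one_mul]
    simp only [hk, add_mul, sub_mul, mul_add, smul_mul_assoc, mul_smul_comm, smul_smul,
      Complex.I_mul_I, neg_smul, one_smul, sub_neg_eq_add, mul_assoc, h1]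
    match_scalars <;> simp [Complex.I_sq]
  have hab : a * b = 1 := by rw [hb, key1, hkk']
  have hstara : star a = m - Complex.I • n := by
    rw [ha, star_add, star_smul, hm.star_eq, hnsa.star_eq]
    simp [Complex.conj_I, sub_eq_add_neg]
  have hsac : star a * c = 1 := by rw [hstara, hc, key2, hkk']
  have hca : star c * a = 1 := by
    have := congrArg star hsac
    rwa [star_mul, star_star, star_one] at this
  have hbc : b = star c := by
    calc b = 1 * b := (one_mul b).symm
    _ = star c * (a * b) := by rw [← hca, mul_assoc]
    _ = star c := by rw [hab, mul_one]
  have hba : b * a = 1 := by rw [hbc, hca]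
  have hau : IsUnit a := ⟨⟨a, b, hab, hba⟩, rfl⟩
  have hinva : Ring.inverse a = b := by
    rw [show a = ((⟨a, b, hab, hba⟩ : Aˣ) : A) from rfl, Ring.inverse_unit]; rfl
  have hstarb : star b = c := by rw [hbc, star_star]
  -- the key symmetry: b = star c gives n' m k' = k' m n'
  have hsym : n' * m * k' = k' * m * n' := by
    have hsc : star c = k' * m * n' - Complex.I • k' := by
      rw [hc, star_add, star_mul, star_mul, star_smul, hm.star_eq, hn'sa.star_eq,
        hk'sa.star_eq]
      simp [Complex.conj_I, sub_eq_add_neg, mul_assoc]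
    have := hbc
    rw [hsc, hb] at this
    exact sub_left_inj.mp this
  refine ⟨hau, ⟨hk0, hku⟩, ?_, ?_⟩
  · rw [cstarIm, hinva, hstarb, hb, hc]
    have : n' * m * k' - Complex.I • k' - (n' * m * k' + Complex.I • k')
        = (-(2 * Complex.I)) • k' := by module
    rw [this, smul_smul]
    field_simp
    exact neg_one_smul ℂ k'
  · rw [cstarRe, hinva, hstarb, hb, hc]
    have : n' * m * k' - Complex.I • k' + (n' * m * k' + Complex.I • k')
        = (2 : ℂ) • (n' * m * k') := by module
    rw [this, smul_smul]
    norm_num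
end
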